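/- arXiv:0810.3147 — 6 statements merged into one kernel-verified Lean document; each statement's English description precedes it below -/
import Mathlib

section
/- Let K be a field, and let M be a (G_K,A)-module of rank r ≥ 1. Let 𝔭 ⊆ A be a nonzero prime ideal, and suppose there exists a constant C_𝔭 such that I(𝔭^n) ≤ C_𝔭 for all n ≥ 1. Then there exists a constant C > 0 such that for every finite separable extension L/K inside K^sep, card(M[𝔭^∞](L)) ≤ C·[L:K]^{1/r}. -/
open Submodule

section GaloisModulePreamble

variable {A : Type*} [CommRing A]
variable {K Ksep : Type*} [Field K] [Field Ksep] [Algebra K Ksep]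
variable {M : Type*} [AddCommGroup M] [Module A M]

/-- Restriction of an `A`-linear automorphism of `M` to the `𝔞`-torsion submodule `M[𝔞]`. -/
def LinearEquiv.restrictTorsionBySet (f : M ≃ₗ[A] M) (𝔞 : Ideal A) :
    torsionBySet A M 𝔞 ≃ₗ[A] torsionBySet A M 𝔞 :=
  LinearEquiv.ofSubmodules f _ _ <| by
    ext x
    simp only [Submodule.mem_map, mem_torsionBySet_iff]
    constructor
    · rintro ⟨y, hy, rfl⟩ a
      simpa using congrArg f (hy a)
    · intro hx
      refine ⟨f.symm x, fun a => ?_, f.apply_symm_apply x⟩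
      simpa using congrArg f.symm (hx a)

/-- The Galois representation `ρ_𝔞 : G_K → Aut_A(M[𝔞])` induced by an action
`ρ : G_K →* Aut_A(M)`. -/
def galRep (ρ : (Ksep ≃ₐ[K] Ksep) →* (M ≃ₗ[A] M)) (𝔞 : Ideal A) :
    (Ksep ≃ₐ[K] Ksep) →* (torsionBySet A M 𝔞 ≃ₗ[A] torsionBySet A M 𝔞) where
  toFun σ := (ρ σ).restrictTorsionBySet 𝔞
  map_one' := by
    apply LinearEquiv.toLinearMap_injective
    apply LinearMap.ext
    intro x
    apply Subtype.ext
    simp [LinearEquiv.restrictTorsionBySet]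
  map_mul' σ τ := by
    apply LinearEquiv.toLinearMap_injective
    apply LinearMap.ext
    intro x
    apply Subtype.ext
    simp [LinearEquiv.restrictTorsionBySet]

/-- The index `I(𝔞)` of the image of the Galois representation `ρ_𝔞` in `Aut_A(M[𝔞])`. -/
noncomputable def galIndex (ρ : (Ksep ≃ₐ[K] Ksep) →* (M ≃ₗ[A] M)) (𝔞 : Ideal A) : ℕ :=
  (galRep ρ 𝔞).range.index

/-- `M` is a `(G_K, A)`-module of rank `r` via the action `ρ : G_K →* Aut_A(M)`:
every torsion element is fixed by an open subgroup of `G_K` (equivalently, has open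
stabilizer, for the Krull topology), and `M[𝔞] ≅ (A ⧸ 𝔞)^r` for every nonzero ideal `𝔞`. -/
structure IsGaloisModule (ρ : (Ksep ≃ₐ[K] Ksep) →* (M ≃ₗ[A] M)) (r : ℕ) : Prop where
  openStab : ∀ x : M, x ∈ torsion A M → IsOpen {σ : Ksep ≃ₐ[K] Ksep | ρ σ x = x}
  rankEq : ∀ 𝔞 : Ideal A, 𝔞 ≠ ⊥ →
    Nonempty (torsionBySet A M (𝔞 : Set A) ≃ₗ[A] (Fin r → A ⧸ 𝔞))

/-- The `L`-rational points of a subset `X ⊆ M`: the elements of `X` fixed by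
`Gal(Ksep/L)`. -/
def galPoints (ρ : (Ksep ≃ₐ[K] Ksep) →* (M ≃ₗ[A] M)) (L : IntermediateField K Ksep)
    (X : Set M) : Set M :=
  {x ∈ X | ∀ σ ∈ L.fixingSubgroup, ρ σ x = x}

/-- The subgroup of `G_K` fixing a subset `H ⊆ M` pointwise. -/
def fixingSubgroupOf (ρ : (Ksep ≃ₐ[K] Ksep) →* (M ≃ₗ[A] M)) (H : Set M) :
    Subgroup (Ksep ≃ₐ[K] Ksep) where
  carrier := {σ | ∀ x ∈ H, ρ σ x = x}
  one_mem' := by simp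
  mul_mem' := by
    intro σ τ hσ hτ x hx
    simp only [map_mul]
    change ρ σ (ρ τ x) = x
    rw [hτ x hx, hσ x hx]
  inv_mem' := by
    intro σ hσ x hx
    simp only [map_inv]
    conv_lhs => rw [← hσ x hx]
    exact (ρ σ).symm_apply_apply x

/-- The field `K(H)` generated over `K` by a set `H` of points of `M`: the fixed field
of the subgroup of `G_K` fixing `H` pointwise. -/
noncomputable def fieldGenBy (ρ : (Ksep ≃ₐ[K] Ksep) →* (M ≃ₗ[A] M)) (H : Set M) :
    IntermediateField K Ksep :=
  IntermediateField.fixedField (fixingSubgroupOf ρ H)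

end GaloisModulePreamble


open Submodule

section AuxCard
variable {A : Type*} [CommRing A] [IsDomain A] [IsDedekindDomain A]
variable {𝔭 : Ideal A}

lemma aux_card_quot_pow (h𝔭 : 𝔭.IsPrime) (h0 : 𝔭 ≠ ⊥) (k : ℕ) :
    Nat.card (A ⧸ (𝔭 ^ k : Ideal A)) = Nat.card (A ⧸ 𝔭) ^ k := by
  haveI := h𝔭
  have := cardQuot_pow_of_prime (P := 𝔭) h0 (i := k)
  simpa [Submodule.cardQuot_apply] using this

/-- membership in the image of `𝔭^b` in `A ⧸ 𝔭^N`. -/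
lemma aux_mem_map_iff {b N : ℕ} (hbN : b ≤ N) (x : A) :
    (𝔭 ^ N : Ideal A).mkQ x ∈ map (𝔭 ^ N : Ideal A).mkQ (𝔭 ^ b : Ideal A) ↔ x ∈ (𝔭 ^ b : Ideal A) := by
  constructor
  · rintro ⟨y, hy, hyx⟩
    have h1 : x - y ∈ (𝔭 ^ N : Ideal A) := (Submodule.Quotient.eq _).mp hyx.symm
    have h2 : x - y ∈ (𝔭 ^ b : Ideal A) := Ideal.pow_le_pow_right hbN h1
    simpa using add_mem h2 hy
  · intro hx
    exact ⟨x, hx, rfl⟩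
end AuxCard

section AuxCard2
variable {A : Type*} [CommRing A] [IsDomain A] [IsDedekindDomain A]
variable {𝔭 : Ideal A}

lemma aux_card_map (h𝔭 : 𝔭.IsPrime) (h0 : 𝔭 ≠ ⊥)
    (hfin : ∀ k : ℕ, Finite (A ⧸ (𝔭 ^ k : Ideal A)))
    {b N : ℕ} (hbN : b ≤ N) :
    Nat.card (map (𝔭 ^ N : Ideal A).mkQ (𝔭 ^ b : Ideal A)) = Nat.card (A ⧸ 𝔭) ^ (N - b) := by
  set J : Submodule A (A ⧸ (𝔭 ^ N : Ideal A)) := map (𝔭 ^ N : Ideal A).mkQ (𝔭 ^ b : Ideal A) with hJ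
  have hsur : Function.Surjective (J.mkQ.comp (𝔭 ^ N : Ideal A).mkQ) :=
    (Submodule.mkQ_surjective _).comp (Submodule.mkQ_surjective _)
  have hker : LinearMap.ker (J.mkQ.comp (𝔭 ^ N : Ideal A).mkQ) = (𝔭 ^ b : Ideal A) := by
    ext x
    simp only [LinearMap.mem_ker, LinearMap.comp_apply, Submodule.Quotient.mk_eq_zero,
      Submodule.mkQ_apply]
    rw [← Submodule.mkQ_apply]
    exact aux_mem_map_iff hbN x
  have e1 : (A ⧸ (𝔭 ^ b : Ideal A)) ≃ₗ[A]
      ((A ⧸ (𝔭 ^ N : Ideal A)) ⧸ J) :=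
    (Submodule.quotEquivOfEq _ _ hker.symm).trans
      (LinearMap.quotKerEquivOfSurjective _ hsur)
  have hcardq : Nat.card ((A ⧸ (𝔭 ^ N : Ideal A)) ⧸ J) = Nat.card (A ⧸ 𝔭) ^ b := by
    rw [← Nat.card_congr e1.toEquiv, aux_card_quot_pow h𝔭 h0]
  haveI : Finite (A ⧸ (𝔭 ^ N : Ideal A)) := hfin N
  have htot := Submodule.card_eq_card_quotient_mul_card J
  rw [aux_card_quot_pow h𝔭 h0, hcardq] at htot
  have hqpos : 0 < Nat.card (A ⧸ 𝔭) := by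
    haveI : Finite (A ⧸ 𝔭) := by
      have := hfin 1
      simpa using this
    exact Nat.card_pos
  have : Nat.card (A ⧸ 𝔭) ^ b * Nat.card (A ⧸ 𝔭) ^ (N - b)
      = Nat.card (A ⧸ 𝔭) ^ b * Nat.card J := by
    rw [← pow_add, Nat.add_sub_cancel' hbN, htot]
    exact Nat.mul_comm _ _
  exact (Nat.eq_of_mul_eq_mul_left (pow_pos hqpos b) this).symm
end AuxCard2

section AuxCard3
variable {A : Type*} [CommRing A] [IsDomain A] [IsDedekindDomain A]
variable {𝔭 : Ideal A}

lemma aux_pow_ne_zero (h0 : 𝔭 ≠ ⊥) (k : ℕ) : (𝔭 ^ k : Ideal A) ≠ 0 :=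
  pow_ne_zero k (by simpa [Ideal.zero_eq_bot] using h0)

lemma aux_torsion_eq_map (h0 : 𝔭 ≠ ⊥) {a N : ℕ} (haN : a ≤ N) :
    torsionBySet A (A ⧸ (𝔭 ^ N : Ideal A)) ((𝔭 ^ a : Ideal A) : Set A)
      = map (𝔭 ^ N : Ideal A).mkQ (𝔭 ^ (N - a) : Ideal A) := by
  ext y
  obtain ⟨x, rfl⟩ := Submodule.mkQ_surjective _ y
  rw [mem_torsionBySet_iff]
  constructor
  · intro h
    have hle : Ideal.span {x} * 𝔭 ^ a ≤ 𝔭 ^ N := by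
      rw [Ideal.mul_le]
      intro rr hr c hc
      obtain ⟨d, rfl⟩ := Ideal.mem_span_singleton'.mp hr
      have hcx : c * x ∈ (𝔭 ^ N : Ideal A) := by
        have := h ⟨c, hc⟩
        rw [← map_smul, Submodule.mkQ_apply, Submodule.Quotient.mk_eq_zero] at this
        simpa [smul_eq_mul] using this
      have : d * (c * x) ∈ (𝔭 ^ N : Ideal A) := Ideal.mul_mem_left _ _ hcx
      convert this using 1
      ring
    have hdvd : (𝔭 ^ (N - a) : Ideal A) ∣ Ideal.span {x} := by
      have key : (𝔭 ^ (N - a) : Ideal A) * 𝔭 ^ a ∣ Ideal.span {x} * 𝔭 ^ a := by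
        rw [← pow_add, Nat.sub_add_cancel haN]
        exact Ideal.dvd_iff_le.mpr hle
      exact (mul_dvd_mul_iff_right (aux_pow_ne_zero h0 a)).mp key
    exact ⟨x, Ideal.dvd_iff_le.mp hdvd (Ideal.mem_span_singleton_self x), rfl⟩
  · rintro ⟨z, hz, hzx⟩ ⟨c, hc⟩
    rw [← hzx, ← map_smul, Submodule.mkQ_apply, Submodule.Quotient.mk_eq_zero]
    have : z * c ∈ (𝔭 ^ (N - a) : Ideal A) * 𝔭 ^ a := Ideal.mul_mem_mul hz hc
    rw [← pow_add, Nat.sub_add_cancel haN] at this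
    simpa [smul_eq_mul, mul_comm] using this

lemma aux_card_torsion (h𝔭 : 𝔭.IsPrime) (h0 : 𝔭 ≠ ⊥)
    (hfin : ∀ k : ℕ, Finite (A ⧸ (𝔭 ^ k : Ideal A)))
    {a N : ℕ} (haN : a ≤ N) :
    Nat.card (torsionBySet A (A ⧸ (𝔭 ^ N : Ideal A)) ((𝔭 ^ a : Ideal A) : Set A))
      = Nat.card (A ⧸ 𝔭) ^ a := by
  rw [aux_torsion_eq_map h0 haN, aux_card_map h𝔭 h0 hfin (Nat.sub_le N a),
    Nat.sub_sub_self haN]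
end AuxCard3

section AuxHom
universe u
variable {A : Type*} [CommRing A] [IsDomain A] [IsDedekindDomain A]
variable {𝔭 : Ideal A}

lemma aux_card_hom_le (h𝔭 : 𝔭.IsPrime) (h0 : 𝔭 ≠ ⊥)
    (hfin : ∀ k : ℕ, Finite (A ⧸ (𝔭 ^ k : Ideal A))) (N : ℕ) (n : ℕ) :
    ∀ (U : Type u) [AddCommGroup U] [Module A U] [Finite U],
      Module.IsTorsionBySet A U ((𝔭 ^ N : Ideal A) : Set A) → Nat.card U ≤ n →
      Nat.card (U →ₗ[A] (A ⧸ (𝔭 ^ N : Ideal A))) ≤ Nat.card U := by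
  induction n with
  | zero =>
    intro U _ _ _ _ hle
    have : (0 : ℕ) < Nat.card U := Nat.card_pos
    omega
  | succ m IH =>
    intro U _ _ _ htors hle
    haveI : Finite (U →ₗ[A] (A ⧸ (𝔭 ^ N : Ideal A))) := by
      haveI : Finite (A ⧸ (𝔭 ^ N : Ideal A)) := hfin N
      exact Finite.of_injective (fun f => (f : U → _)) DFunLike.coe_injective
    by_cases hsub : Subsingleton U
    · have h1 : Nat.card U = 1 := Nat.card_eq_one_iff_unique.mpr ⟨hsub, ⟨0⟩⟩
      have h2 : Nat.card (U →ₗ[A] (A ⧸ (𝔭 ^ N : Ideal A))) = 1 := by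
        haveI : Subsingleton (U →ₗ[A] (A ⧸ (𝔭 ^ N : Ideal A))) :=
          ⟨fun f g => by ext u; rw [Subsingleton.elim u 0]; simp⟩
        exact Nat.card_eq_one_iff_unique.mpr ⟨this, ⟨0⟩⟩
      omega
    · rw [not_subsingleton_iff_nontrivial] at hsub
      obtain ⟨x, hx⟩ := exists_ne (0 : U)
      set ℓ := LinearMap.toSpanSingleton A U x with hℓ
      have hker_le : (𝔭 ^ N : Ideal A) ≤ LinearMap.ker ℓ := by
        intro c hc
        rw [LinearMap.mem_ker, hℓ, LinearMap.toSpanSingleton_apply]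
        exact @htors x ⟨c, hc⟩
      obtain ⟨j, hjN, hassoc⟩ :=
        (dvd_prime_pow (Ideal.prime_of_isPrime h0 h𝔭) N).mp (Ideal.dvd_iff_le.mpr hker_le)
      have hkerEq : LinearMap.ker ℓ = 𝔭 ^ j := associated_iff_eq.mp hassoc
      set C := LinearMap.range ℓ with hC
      haveI : Finite (A ⧸ (𝔭 ^ N : Ideal A)) := hfin N
      have cardC : Nat.card C = Nat.card (A ⧸ 𝔭) ^ j := by
        rw [← Nat.card_congr ℓ.quotKerEquivRange.toEquiv,
          Nat.card_congr (Submodule.quotEquivOfEq _ _ hkerEq).toEquiv,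
          aux_card_quot_pow h𝔭 h0]
      have hxC : x ∈ C := ⟨1, by simp [hℓ]⟩
      -- bound for the cyclic module C
      have hCbound : Nat.card (↥C →ₗ[A] (A ⧸ (𝔭 ^ N : Ideal A))) ≤ Nat.card C := by
        have hinj : Function.Injective
            (fun f : (↥C →ₗ[A] (A ⧸ (𝔭 ^ N : Ideal A))) =>
              (⟨f ⟨x, hxC⟩, by
                rw [mem_torsionBySet_iff]
                rintro ⟨c, hc⟩
                have hcx : c • (⟨x, hxC⟩ : ↥C) = 0 := by
                  apply Subtype.ext
                  have : c ∈ LinearMap.ker ℓ := hkerEq ▸ hc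
                  simpa [hℓ, LinearMap.toSpanSingleton_apply] using this
                rw [← map_smul, hcx, map_zero]⟩ :
                torsionBySet A (A ⧸ (𝔭 ^ N : Ideal A)) ((𝔭 ^ j : Ideal A) : Set A))) := by
          intro f g hfg
          rw [Subtype.mk_eq_mk] at hfg
          ext ⟨y, hy⟩
          obtain ⟨a, ha⟩ := hy
          have hy' : (⟨y, ⟨a, ha⟩⟩ : ↥C) = a • ⟨x, hxC⟩ := by
            apply Subtype.ext
            simpa [hℓ, LinearMap.toSpanSingleton_apply] using ha.symm
          rw [hy', map_smul, map_smul, hfg]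
        calc Nat.card (↥C →ₗ[A] (A ⧸ (𝔭 ^ N : Ideal A)))
            ≤ Nat.card (torsionBySet A (A ⧸ (𝔭 ^ N : Ideal A)) ((𝔭 ^ j : Ideal A) : Set A)) :=
              Nat.card_le_card_of_injective _ hinj
          _ = Nat.card (A ⧸ 𝔭) ^ j := aux_card_torsion h𝔭 h0 hfin hjN
          _ = Nat.card C := cardC.symm
      -- C is nontrivial
      have hq2 : 2 ≤ Nat.card (A ⧸ 𝔭) := by
        haveI : Finite (A ⧸ 𝔭) := by have := hfin 1; simpa using this
        haveI : Nontrivial (A ⧸ 𝔭) := Ideal.Quotient.nontrivial_iff.mpr h𝔭.ne_top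
        exact Finite.one_lt_card
      have hj1 : 1 ≤ j := by
        by_contra hj
        have hj0 : j = 0 := by omega
        have : x = 0 := by
          have h1 : (1 : A) ∈ LinearMap.ker ℓ := by
            rw [hkerEq, hj0, pow_zero, Ideal.one_eq_top]; exact Submodule.mem_top
          simpa [hℓ, LinearMap.toSpanSingleton_apply] using h1
        exact hx this
      have hC2 : 2 ≤ Nat.card C := by
        calc (2:ℕ) ≤ Nat.card (A ⧸ 𝔭) := hq2
        _ ≤ Nat.card (A ⧸ 𝔭) ^ j := Nat.le_self_pow (by omega) _
        _ = Nat.card C := cardC.symm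
      -- quotient U ⧸ C
      haveI : Finite (U ⧸ C) := Finite.of_surjective _ (Submodule.mkQ_surjective C)
      have htorsQ : Module.IsTorsionBySet A (U ⧸ C) ((𝔭 ^ N : Ideal A) : Set A) := by
        intro y c
        obtain ⟨u, rfl⟩ := Submodule.mkQ_surjective C y
        rw [← map_smul, @htors u c, map_zero]
      have hcardU : Nat.card U = Nat.card C * Nat.card (U ⧸ C) :=
        Submodule.card_eq_card_quotient_mul_card C
      have hQle : Nat.card (U ⧸ C) ≤ m := by
        have h1 : 1 ≤ Nat.card (U ⧸ C) := Nat.card_pos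
        have h2 : 2 * Nat.card (U ⧸ C) ≤ Nat.card C * Nat.card (U ⧸ C) :=
          Nat.mul_le_mul_right _ hC2
        omega
      have hIH := IH (U ⧸ C) htorsQ hQle
      -- kernel of restriction embeds in Hom(U ⧸ C, R)
      -- restriction as an additive hom
      set res : (U →ₗ[A] (A ⧸ (𝔭 ^ N : Ideal A))) →+ (↥C →ₗ[A] (A ⧸ (𝔭 ^ N : Ideal A))) :=
        AddMonoidHom.mk' (fun f => f.comp C.subtype) (fun f g => rfl) with hres
      haveI : Finite (↥C →ₗ[A] (A ⧸ (𝔭 ^ N : Ideal A))) :=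
        Finite.of_injective (fun f => (f : ↥C → _)) DFunLike.coe_injective
      haveI : Finite ((U ⧸ C) →ₗ[A] (A ⧸ (𝔭 ^ N : Ideal A))) :=
        Finite.of_injective (fun f => (f : (U ⧸ C) → _)) DFunLike.coe_injective
      have hkerinj : Function.Injective
          (fun f : ↥res.ker => Submodule.liftQ C (f : U →ₗ[A] (A ⧸ (𝔭 ^ N : Ideal A)))
            (by
              intro y hy
              have h0' : ((f : U →ₗ[A] (A ⧸ (𝔭 ^ N : Ideal A))).comp C.subtype) = 0 := f.2
              have := congrArg (fun g => g ⟨y, hy⟩) h0'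
              simpa using this)) := by
        intro f g hfg
        apply Subtype.ext
        apply LinearMap.ext
        intro u
        have h2 := congrArg (fun h => h.comp C.mkQ) hfg
        simp only [Submodule.liftQ_mkQ] at h2
        exact DFunLike.congr_fun h2 u
      have hker_card : Nat.card res.ker ≤ Nat.card (U ⧸ C) := by
        calc Nat.card res.ker ≤ Nat.card ((U ⧸ C) →ₗ[A] (A ⧸ (𝔭 ^ N : Ideal A))) :=
            Nat.card_le_card_of_injective _ hkerinj
        _ ≤ Nat.card (U ⧸ C) := hIH
      have hrange_card : Nat.card res.range ≤ Nat.card (↥C →ₗ[A] (A ⧸ (𝔭 ^ N : Ideal A))) :=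
        Nat.card_le_card_of_injective _ Subtype.val_injective
      have hsplit : Nat.card (U →ₗ[A] (A ⧸ (𝔭 ^ N : Ideal A)))
          = Nat.card res.range * Nat.card res.ker := by
        rw [AddSubgroup.card_eq_card_quotient_mul_card_addSubgroup res.ker,
          Nat.card_congr (QuotientAddGroup.quotientKerEquivRange res).toEquiv]
      calc Nat.card (U →ₗ[A] (A ⧸ (𝔭 ^ N : Ideal A)))
          = Nat.card res.range * Nat.card res.ker := hsplit
        _ ≤ Nat.card (↥C →ₗ[A] (A ⧸ (𝔭 ^ N : Ideal A))) * Nat.card (U ⧸ C) :=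
            Nat.mul_le_mul hrange_card hker_card
        _ ≤ Nat.card C * Nat.card (U ⧸ C) := Nat.mul_le_mul_right _ hCbound
        _ = Nat.card U := hcardU.symm
end AuxHom

section AuxAut
variable {A : Type*} [CommRing A]

/-- The map `A ⧸ 𝔞 →ₗ[A] V` sending `a mod 𝔞` to `a • x`, for a module `V` killed by `𝔞`. -/
noncomputable def auxCmap (𝔞 : Ideal A) {V : Type*} [AddCommGroup V] [Module A V]
    (htors : Module.IsTorsionBySet A V (𝔞 : Set A)) (x : V) : (A ⧸ 𝔞) →ₗ[A] V :=
  Submodule.liftQ 𝔞 (LinearMap.toSpanSingleton A V x) (fun c hc => by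
    rw [LinearMap.mem_ker, LinearMap.toSpanSingleton_apply]
    exact @htors x ⟨c, hc⟩)

lemma auxCmap_mk (𝔞 : Ideal A) {V : Type*} [AddCommGroup V] [Module A V]
    (htors : Module.IsTorsionBySet A V (𝔞 : Set A)) (x : V) (a : A) :
    auxCmap 𝔞 htors x ((𝔞 : Submodule A A).mkQ a) = a • x := by
  have h : (𝔞 : Submodule A A).mkQ a = Submodule.Quotient.mk a := rfl
  rw [auxCmap, h, Submodule.liftQ_apply, LinearMap.toSpanSingleton_apply]

lemma aux_nilpotent (𝔭 : Ideal A) (N : ℕ) {V : Type*} [AddCommGroup V] [Module A V]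
    (htors : Module.IsTorsionBySet A V ((𝔭 ^ N : Ideal A) : Set A))
    (φ : Module.End A V) (hφ : LinearMap.range φ ≤ 𝔭 • ⊤) : φ ^ N = 0 := by
  have key : ∀ k : ℕ, LinearMap.range (φ ^ k) ≤ (𝔭 ^ k) • (⊤ : Submodule A V) := by
    intro k
    induction k with
    | zero => simp [Ideal.one_eq_top]
    | succ k ih =>
      rw [pow_succ]
      rw [Module.End.mul_eq_comp, LinearMap.range_comp]
      calc Submodule.map (φ ^ k) (LinearMap.range φ)
          ≤ Submodule.map (φ ^ k) (𝔭 • ⊤) := Submodule.map_mono hφ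
        _ = 𝔭 • Submodule.map (φ ^ k) ⊤ := Submodule.map_smul'' 𝔭 ⊤ (φ ^ k)
        _ ≤ 𝔭 • ((𝔭 ^ k) • (⊤ : Submodule A V)) := by
            apply smul_mono_right
            rw [Submodule.map_top]
            exact ih
        _ = (𝔭 ^ (k + 1)) • (⊤ : Submodule A V) := by
            rw [← Submodule.smul_assoc, smul_eq_mul, ← pow_succ']
  have hN : LinearMap.range (φ ^ N) ≤ ⊥ := by
    refine (key N).trans ?_
    rw [Submodule.smul_le]
    intro c hc v _
    rw [Submodule.mem_bot]
    exact @htors v ⟨c, hc⟩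
  rwa [LinearMap.range_le_bot_iff] at hN
end AuxAut

section AuxAut2
variable {A : Type*} [CommRing A] [IsDomain A] [IsDedekindDomain A]
variable {𝔭 : Ideal A}

lemma aux_torsR (N : ℕ) :
    Module.IsTorsionBySet A (A ⧸ (𝔭 ^ N : Ideal A)) ((𝔭 ^ N : Ideal A) : Set A) := by
  intro y c
  obtain ⟨x, rfl⟩ := Submodule.mkQ_surjective _ y
  rw [← map_smul, Submodule.mkQ_apply, Submodule.Quotient.mk_eq_zero]
  simpa [smul_eq_mul] using Ideal.mul_mem_right x _ c.2

lemma aux_torsV (N r : ℕ) :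
    Module.IsTorsionBySet A (Fin r → A ⧸ (𝔭 ^ N : Ideal A)) ((𝔭 ^ N : Ideal A) : Set A) := by
  intro v c
  funext i
  have := @aux_torsR A _ _ _ 𝔭 N (v i) c
  simpa [Pi.smul_apply] using this

lemma aux_card_aut_ge (h𝔭 : 𝔭.IsPrime) (h0 : 𝔭 ≠ ⊥)
    (hfin : ∀ k : ℕ, Finite (A ⧸ (𝔭 ^ k : Ideal A))) {N : ℕ} (hN : 1 ≤ N) (r : ℕ) :
    Nat.card (A ⧸ 𝔭) ^ ((N - 1) * (r * r))
      ≤ Nat.card ((Fin r → A ⧸ (𝔭 ^ N : Ideal A)) ≃ₗ[A] (Fin r → A ⧸ (𝔭 ^ N : Ideal A))) := by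
  classical
  haveI : Finite (A ⧸ (𝔭 ^ N : Ideal A)) := hfin N
  set J : Submodule A (A ⧸ (𝔭 ^ N : Ideal A)) := map (𝔭 ^ N : Ideal A).mkQ 𝔭 with hJdef
  set V := Fin r → A ⧸ (𝔭 ^ N : Ideal A) with hV
  have htV : Module.IsTorsionBySet A V ((𝔭 ^ N : Ideal A) : Set A) := aux_torsV N r
  have hone : (1 : A ⧸ (𝔭 ^ N : Ideal A)) = (𝔭 ^ N : Ideal A).mkQ 1 := by
    rw [Submodule.mkQ_apply, Ideal.Quotient.mk_eq_mk]
    exact (map_one _).symm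
  set mkφ : (Fin r → Fin r → ↥J) → Module.End A V := fun m =>
    ∑ i, (auxCmap (𝔭 ^ N) htV (fun j => ↑(m i j))).comp (LinearMap.proj i) with hmkφ
  -- evaluation at single vectors
  have heval : ∀ (m : Fin r → Fin r → ↥J) (i : Fin r),
      mkφ m (Pi.single i (1 : A ⧸ (𝔭 ^ N : Ideal A))) = fun j => ↑(m i j) := by
    intro m i
    rw [hmkφ]
    simp only [LinearMap.sum_apply, LinearMap.comp_apply, LinearMap.proj_apply]
    rw [Finset.sum_eq_single i]
    · have h1 : (LinearMap.proj i : (Fin r → A ⧸ (𝔭 ^ N : Ideal A)) →ₗ[A] A ⧸ (𝔭 ^ N : Ideal A))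
          (Pi.single i (1 : A ⧸ (𝔭 ^ N : Ideal A))) = 1 := by
        show Pi.single (M := fun _ : Fin r => A ⧸ (𝔭 ^ N : Ideal A)) i 1 i = 1
        exact Pi.single_eq_same i 1
      rw [h1, hone, auxCmap_mk, one_smul]
    · intro b _ hb
      have h1 : (LinearMap.proj b : (Fin r → A ⧸ (𝔭 ^ N : Ideal A)) →ₗ[A] A ⧸ (𝔭 ^ N : Ideal A))
          (Pi.single i (1 : A ⧸ (𝔭 ^ N : Ideal A))) = 0 := by
        show Pi.single (M := fun _ : Fin r => A ⧸ (𝔭 ^ N : Ideal A)) i 1 b = 0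
        exact Pi.single_eq_of_ne hb 1
      rw [h1, map_zero]
    · intro h; exact absurd (Finset.mem_univ i) h
  -- membership of the columns
  have hmem : ∀ (m : Fin r → Fin r → ↥J) (i : Fin r),
      (fun j => (↑(m i j) : A ⧸ (𝔭 ^ N : Ideal A)) : V) ∈ 𝔭 • (⊤ : Submodule A V) := by
    intro m i
    rw [← Finset.univ_sum_single (fun j => (↑(m i j) : A ⧸ (𝔭 ^ N : Ideal A)) : V)]
    apply Submodule.sum_mem
    intro j _
    obtain ⟨c, hc, hcm⟩ := (m i j).2
    have h1 : (↑(m i j) : A ⧸ (𝔭 ^ N : Ideal A)) = c • (1 : A ⧸ (𝔭 ^ N : Ideal A)) := by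
      rw [hone, ← map_smul, smul_eq_mul, mul_one, ← hcm]
    rw [h1, Pi.single_smul]
    exact Submodule.smul_mem_smul hc Submodule.mem_top
  -- range of mkφ m
  have hrange : ∀ m, LinearMap.range (mkφ m) ≤ 𝔭 • (⊤ : Submodule A V) := by
    intro m
    rintro y ⟨v, rfl⟩
    rw [hmkφ]
    simp only [LinearMap.sum_apply, LinearMap.comp_apply, LinearMap.proj_apply]
    apply Submodule.sum_mem
    intro i _
    obtain ⟨a, ha⟩ := Submodule.mkQ_surjective _ (v i)
    have key : (auxCmap (𝔭 ^ N) htV fun j => ↑(m i j))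
          ((LinearMap.proj i : (Fin r → A ⧸ (𝔭 ^ N : Ideal A)) →ₗ[A] A ⧸ (𝔭 ^ N : Ideal A)) v)
        = a • (fun j => (↑(m i j) : A ⧸ (𝔭 ^ N : Ideal A))) := by
      have h2 : (LinearMap.proj i : (Fin r → A ⧸ (𝔭 ^ N : Ideal A)) →ₗ[A] A ⧸ (𝔭 ^ N : Ideal A)) v
          = (𝔭 ^ N : Ideal A).mkQ a := ha.symm
      rw [h2, auxCmap_mk]
    rw [key]
    exact Submodule.smul_mem _ a (hmem m i)
  have hbij : ∀ m, Function.Bijective ((1 : Module.End A V) + mkφ m) := by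
    intro m
    have hnil : IsNilpotent (mkφ m) := ⟨N, aux_nilpotent 𝔭 N htV (mkφ m) (hrange m)⟩
    have := hnil.isUnit_one_add
    exact (Module.End.isUnit_iff _).mp this
  set Φ : (Fin r → Fin r → ↥J) → (V ≃ₗ[A] V) := fun m =>
    LinearEquiv.ofBijective ((1 : Module.End A V) + mkφ m) (hbij m) with hΦ
  have hinj : Function.Injective Φ := by
    intro m m' hmm
    funext i j
    apply Subtype.ext
    have h1 : Φ m (Pi.single i 1) = Φ m' (Pi.single i 1) := by rw [hmm]
    rw [hΦ] at h1
    simp only [LinearEquiv.ofBijective_apply, LinearMap.add_apply, Module.End.one_apply] at h1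
    have h2 : mkφ m (Pi.single i 1) = mkφ m' (Pi.single i 1) := by
      have := add_left_cancel h1
      exact this
    rw [heval, heval] at h2
    exact congrFun h2 j
  haveI : Finite (V ≃ₗ[A] V) :=
    Finite.of_injective (fun g => (g : V → V)) DFunLike.coe_injective
  have hcard := Nat.card_le_card_of_injective Φ hinj
  have hcardJ : Nat.card ↥J = Nat.card (A ⧸ 𝔭) ^ (N - 1) := by
    have := aux_card_map h𝔭 h0 hfin (b := 1) hN
    rwa [pow_one] at this
  have hcardD : Nat.card (Fin r → Fin r → ↥J) = Nat.card (A ⧸ 𝔭) ^ ((N - 1) * (r * r)) := by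
    rw [Nat.card_fun, Nat.card_fun, hcardJ]
    have hfr : Nat.card (Fin r) = r := by simp
    rw [hfr, ← pow_mul, ← pow_mul]
  rwa [hcardD] at hcard
end AuxAut2

section AuxHomPi
universe u
variable {A : Type*} [CommRing A] [IsDomain A] [IsDedekindDomain A]
variable {𝔭 : Ideal A}

lemma aux_card_hom_pi_le (h𝔭 : 𝔭.IsPrime) (h0 : 𝔭 ≠ ⊥)
    (hfin : ∀ k : ℕ, Finite (A ⧸ (𝔭 ^ k : Ideal A))) (N r : ℕ)
    (U : Type u) [AddCommGroup U] [Module A U] [Finite U]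
    (htors : Module.IsTorsionBySet A U ((𝔭 ^ N : Ideal A) : Set A)) :
    Nat.card (U →ₗ[A] (Fin r → A ⧸ (𝔭 ^ N : Ideal A))) ≤ Nat.card U ^ r := by
  haveI : Finite (A ⧸ (𝔭 ^ N : Ideal A)) := hfin N
  haveI : Finite (U →ₗ[A] (A ⧸ (𝔭 ^ N : Ideal A))) :=
    Finite.of_injective (fun f => (f : U → _)) DFunLike.coe_injective
  have hinj : Function.Injective
      (fun (f : U →ₗ[A] (Fin r → A ⧸ (𝔭 ^ N : Ideal A))) =>
        (fun i => (LinearMap.proj i).comp f : Fin r → (U →ₗ[A] (A ⧸ (𝔭 ^ N : Ideal A))))) := by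
    intro f g hfg
    apply LinearMap.ext
    intro u
    funext i
    exact DFunLike.congr_fun (congrFun hfg i) u
  calc Nat.card (U →ₗ[A] (Fin r → A ⧸ (𝔭 ^ N : Ideal A)))
      ≤ Nat.card (Fin r → (U →ₗ[A] (A ⧸ (𝔭 ^ N : Ideal A)))) :=
        Nat.card_le_card_of_injective _ hinj
    _ = Nat.card (U →ₗ[A] (A ⧸ (𝔭 ^ N : Ideal A))) ^ r := by
        rw [Nat.card_fun]
        congr 1
        simp
    _ ≤ Nat.card U ^ r := Nat.pow_le_pow_left (aux_card_hom_le h𝔭 h0 hfin N (Nat.card U) U htors le_rfl) r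
end AuxHomPi

section AuxGalois
variable {K Ksep : Type*} [Field K] [Field Ksep] [Algebra K Ksep]

lemma aux_fixingSubgroup_index (L : IntermediateField K Ksep) [FiniteDimensional K ↥L] :
    L.fixingSubgroup.index ≠ 0 ∧ L.fixingSubgroup.index ≤ Module.finrank K ↥L := by
  classical
  set H := L.fixingSubgroup with hH
  set resMap : (Ksep ≃ₐ[K] Ksep) → (↥L →ₐ[K] Ksep) := fun σ => σ.toAlgHom.comp L.val with hres
  have hcompat : ∀ (σ : Ksep ≃ₐ[K] Ksep) (y : Ksep), σ (σ⁻¹ y) = y := by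
    intro σ y
    rw [← AlgEquiv.mul_apply, mul_inv_cancel, AlgEquiv.one_apply]
  have hwd : ∀ σ τ : (Ksep ≃ₐ[K] Ksep), (QuotientGroup.leftRel H) σ τ → resMap σ = resMap τ := by
    intro σ τ hst
    rw [QuotientGroup.leftRel_apply] at hst
    apply AlgHom.ext
    intro x
    have h1 := ((IntermediateField.mem_fixingSubgroup_iff L (σ⁻¹ * τ)).mp hst) x x.2
    have h2 : σ ((σ⁻¹ * τ) (x : Ksep)) = σ (x : Ksep) := congrArg σ h1
    rw [AlgEquiv.mul_apply, hcompat] at h2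
    simpa [hres] using h2.symm
  let g : ((Ksep ≃ₐ[K] Ksep) ⧸ H) → (↥L →ₐ[K] Ksep) := Quotient.lift resMap hwd
  have hginj : Function.Injective g := by
    intro a b
    refine Quotient.inductionOn₂ a b ?_
    intro σ τ hfg
    apply Quotient.sound
    refine QuotientGroup.leftRel_apply.mpr ?_
    rw [IntermediateField.mem_fixingSubgroup_iff]
    intro x hx
    have h1 : resMap σ = resMap τ := hfg
    have h2 := congrArg (fun f => f ⟨x, hx⟩) h1
    simp only [hres, AlgHom.coe_comp, Function.comp_apply, AlgEquiv.coe_algHom,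
      IntermediateField.coe_val] at h2
    rw [AlgEquiv.mul_apply, ← h2, ← AlgEquiv.mul_apply, inv_mul_cancel, AlgEquiv.one_apply]
  haveI : Finite (↥L →ₐ[K] Ksep) := Finite.algHom K ↥L Ksep
  haveI : Finite ((Ksep ≃ₐ[K] Ksep) ⧸ H) := Finite.of_injective g hginj
  constructor
  · rw [Subgroup.index_eq_card]
    exact Nat.card_pos.ne'
  · rw [Subgroup.index_eq_card]
    exact (Nat.card_le_card_of_injective g hginj).trans (card_algHom_le_finrank K (↥L) Ksep)
end AuxGalois

lemma aux_real_root {t B d : ℝ} (ht : 0 ≤ t) (hB : 0 ≤ B) (hd : 0 ≤ d) {r : ℕ} (hr : 1 ≤ r)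
    (h : t ^ r ≤ B * d) : t ≤ B ^ ((1 : ℝ) / r) * d ^ ((1 : ℝ) / r) := by
  have hr0 : (r : ℝ) ≠ 0 := Nat.cast_ne_zero.mpr (by omega)
  have h1 : t = (t ^ (r : ℕ)) ^ ((1 : ℝ) / r) := by
    rw [← Real.rpow_natCast t r, ← Real.rpow_mul ht, mul_one_div, div_self hr0, Real.rpow_one]
  rw [h1, ← Real.mul_rpow hB hd]
  exact Real.rpow_le_rpow (by positivity) h (by positivity)

/-- **Theorem (prime-power torsion bound).**
Let `K` be a field and `M` a `(G_K, A)`-module of rank `r ≥ 1`, where `A` is a Dedekind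
domain, not a field, all of whose proper quotients are finite. Let `𝔭 ⊆ A` be a nonzero
prime ideal and suppose the indices `I(𝔭^n)` are bounded by a constant `C𝔭`. Then there
is a constant `C > 0` such that `|M[𝔭^∞](L)| ≤ C · [L:K] ^ (1/r)` for every finite
separable extension `L/K` inside `Ksep`. -/
theorem primePowerTorsion_bound
    {A : Type*} [CommRing A] [IsDomain A] [IsDedekindDomain A] (hA : ¬IsField A)
    (hAfin : ∀ 𝔞 : Ideal A, 𝔞 ≠ ⊥ → Finite (A ⧸ 𝔞))
    {K Ksep : Type*} [Field K] [Field Ksep] [Algebra K Ksep] [IsSepClosure K Ksep]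
    {M : Type*} [AddCommGroup M] [Module A M]
    (ρ : (Ksep ≃ₐ[K] Ksep) →* (M ≃ₗ[A] M)) (r : ℕ) (hr : 1 ≤ r)
    (hGM : IsGaloisModule ρ r)
    (𝔭 : Ideal A) (h𝔭 : 𝔭.IsPrime) (h𝔭0 : 𝔭 ≠ ⊥)
    (C𝔭 : ℝ) (hC𝔭 : ∀ n : ℕ, 1 ≤ n → (galIndex ρ (𝔭 ^ n) : ℝ) ≤ C𝔭) :
    ∃ C : ℝ, 0 < C ∧ ∀ L : IntermediateField K Ksep, FiniteDimensional K L →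
      (Nat.card (galPoints ρ L
          {x : M | ∃ n : ℕ, 1 ≤ n ∧ x ∈ torsionBySet A M ((𝔭 ^ n : Ideal A) : Set A)}) : ℝ)
        ≤ C * (Module.finrank K L : ℝ) ^ ((1 : ℝ) / r) := by
  classical
  have h𝔭0' : (𝔭 : Ideal A) ≠ 0 := by simpa [Ideal.zero_eq_bot] using h𝔭0
  have hfinpow : ∀ k : ℕ, Finite (A ⧸ (𝔭 ^ k : Ideal A)) := fun k =>
    hAfin _ (by simpa [Ideal.zero_eq_bot] using aux_pow_ne_zero h𝔭0 k)
  haveI hfin1 : Finite (A ⧸ 𝔭) := by have := hfinpow 1; rwa [pow_one] at this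
  set q := Nat.card (A ⧸ 𝔭) with hq
  have hq1 : 1 ≤ q := Nat.card_pos
  have hqR : (0 : ℝ) < (q : ℝ) := by exact_mod_cast hq1
  set Cb : ℝ := (q : ℝ) ^ (r * r) * max C𝔭 1 with hCb
  have hCbpos : 0 < Cb := by positivity
  refine ⟨Cb ^ ((1 : ℝ) / r), Real.rpow_pos_of_pos hCbpos _, ?_⟩
  intro L hL
  haveI := hL
  set T : Set M := galPoints ρ L
    {x : M | ∃ n, 1 ≤ n ∧ x ∈ torsionBySet A M ((𝔭 ^ n : Ideal A) : Set A)} with hT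
  set d := Module.finrank K ↥L with hd
  have hd0 : (0 : ℝ) ≤ (d : ℝ) := Nat.cast_nonneg d
  have hRHS0 : (0 : ℝ) ≤ Cb ^ ((1 : ℝ) / r) * (d : ℝ) ^ ((1 : ℝ) / r) := by positivity
  rcases Set.finite_or_infinite T with hTfin | hTinf
  swap
  · haveI := hTinf.to_subtype
    rw [Nat.card_eq_zero_of_infinite]
    exact_mod_cast hRHS0
  -- choose a level N that kills every element of T
  have tors_mono : ∀ {a b : ℕ}, a ≤ b →
      torsionBySet A M ((𝔭 ^ a : Ideal A) : Set A) ≤ torsionBySet A M ((𝔭 ^ b : Ideal A) : Set A) :=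
    fun {a b} hab => Submodule.torsionBySet_le_torsionBySet_of_subset
      (fun c hc => Ideal.pow_le_pow_right hab hc)
  obtain ⟨N, hN1, hTN⟩ : ∃ Nn : ℕ, 1 ≤ Nn ∧ ∀ x ∈ T,
      x ∈ torsionBySet A M ((𝔭 ^ Nn : Ideal A) : Set A) := by
    set F := hTfin.toFinset with hF
    set gn : M → ℕ := fun x =>
      if h : ∃ n, 1 ≤ n ∧ x ∈ torsionBySet A M ((𝔭 ^ n : Ideal A) : Set A) then h.choose else 1
      with hgn
    refine ⟨max 1 (F.sup gn), le_max_left _ _, ?_⟩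
    intro x hx
    have hx1 : ∃ n, 1 ≤ n ∧ x ∈ torsionBySet A M ((𝔭 ^ n : Ideal A) : Set A) := hx.1
    have hgx : x ∈ torsionBySet A M ((𝔭 ^ gn x : Ideal A) : Set A) := by
      rw [hgn]
      dsimp only
      rw [dif_pos hx1]
      exact hx1.choose_spec.2
    refine tors_mono ?_ hgx
    exact le_max_of_le_right (Finset.le_sup (hTfin.mem_toFinset.mpr hx))
  haveI : Finite (A ⧸ (𝔭 ^ N : Ideal A)) := hfinpow N
  obtain ⟨e⟩ := hGM.rankEq (𝔭 ^ N) (by simpa [Ideal.zero_eq_bot] using aux_pow_ne_zero h𝔭0 N)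
  set W := torsionBySet A M ((𝔭 ^ N : Ideal A) : Set A) with hW
  haveI hWfin : Finite ↥W := Finite.of_equiv _ e.symm.toEquiv
  set T' : Submodule A ↥W := Submodule.comap W.subtype (span A T) with hT'
  haveI hGfin : Finite (↥W ≃ₗ[A] ↥W) :=
    Finite.of_injective (fun g => (g : ↥W → ↥W)) DFunLike.coe_injective
  set S : Subgroup (↥W ≃ₗ[A] ↥W) :=
    { carrier := {g | ∀ x ∈ T', g x = x}
      one_mem' := fun x _ => rfl
      mul_mem' := fun {g h} hg hh x hx => by
        have h1 : (g * h) x = g (h x) := rfl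
        rw [h1, hh x hx, hg x hx]
      inv_mem' := fun {g} hg x hx => by
        have h1 : g⁻¹ x = g.symm x := rfl
        rw [h1]
        conv_lhs => rw [← hg x hx]
        exact g.symm_apply_apply x } with hS
  set φN := galRep ρ (𝔭 ^ N) with hφN
  set H := L.fixingSubgroup with hH
  have happly : ∀ (σ : Ksep ≃ₐ[K] Ksep) (x : ↥W), ((φN σ) x : M) = ρ σ (x : M) := by
    intro σ x
    exact LinearEquiv.ofSubmodules_apply (ρ σ) _ x
  have hfix : ∀ σ ∈ H, ∀ x ∈ span A T, ρ σ x = x := by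
    intro σ hσ x hx
    have hTsub : T ⊆ ↑(LinearMap.eqLocus ((ρ σ) : M →ₗ[A] M) (LinearMap.id (R := A) (M := M))) :=
      fun y hy => LinearMap.mem_eqLocus.mpr (hy.2 σ hσ)
    exact Submodule.span_le.mpr hTsub hx
  have hmapS : Subgroup.map φN H ≤ S := by
    rintro g ⟨σ, hσ, rfl⟩
    intro x hx
    apply Subtype.ext
    rw [happly σ x]
    exact hfix σ hσ (x : M) (Submodule.mem_comap.mp hx)
  -- index chain
  obtain ⟨hHne, hHle⟩ := aux_fixingSubgroup_index (K := K) (Ksep := Ksep) L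
  have hSle : S.index ≤ d * galIndex ρ (𝔭 ^ N) := by
    have h1 : S.index ≤ (Subgroup.map φN H).index := by
      have hdvd := Subgroup.index_dvd_of_le hmapS
      have hne : (Subgroup.map φN H).index ≠ 0 := Subgroup.index_ne_zero_of_finite
      exact Nat.le_of_dvd (Nat.pos_of_ne_zero hne) hdvd
    have h2 : (Subgroup.map φN H).index = (H ⊔ φN.ker).index * φN.range.index :=
      Subgroup.index_map H φN
    have h3 : (H ⊔ φN.ker).index ≤ H.index :=
      Nat.le_of_dvd (Nat.pos_of_ne_zero hHne) (Subgroup.index_dvd_of_le le_sup_left)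
    have h4 : galIndex ρ (𝔭 ^ N) = φN.range.index := rfl
    calc S.index ≤ (H ⊔ φN.ker).index * φN.range.index := h2 ▸ h1
      _ ≤ H.index * φN.range.index := Nat.mul_le_mul_right _ h3
      _ ≤ d * galIndex ρ (𝔭 ^ N) := by rw [← h4]; exact Nat.mul_le_mul_right _ hHle
  -- torsion structures
  have htW : Module.IsTorsionBySet A ↥W ((𝔭 ^ N : Ideal A) : Set A) := by
    intro w c
    apply Subtype.ext
    rw [Submodule.coe_smul]
    have h1 := (Submodule.mem_torsionBySet_iff _ _).mp w.2 c
    simpa using h1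
  have htQ : Module.IsTorsionBySet A (↥W ⧸ T') ((𝔭 ^ N : Ideal A) : Set A) := by
    intro y c
    obtain ⟨w, rfl⟩ := Submodule.mkQ_surjective T' y
    rw [← map_smul, @htW w c, map_zero]
  -- three cardinality facts
  have A2 : Nat.card S ≤ Nat.card (↥W ⧸ T') ^ r := by
    have hk : ∀ gS : ↥S, T' ≤ LinearMap.ker
        (((gS : ↥W ≃ₗ[A] ↥W) : ↥W →ₗ[A] ↥W) - LinearMap.id) := by
      intro gS x hx
      rw [LinearMap.mem_ker, LinearMap.sub_apply, LinearMap.id_apply, LinearEquiv.coe_coe,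
        gS.2 x hx, sub_self]
    have hSinj : Function.Injective (fun gS : ↥S => Submodule.liftQ T'
        (((gS : ↥W ≃ₗ[A] ↥W) : ↥W →ₗ[A] ↥W) - LinearMap.id) (hk gS)) := by
      intro f g hfg
      apply Subtype.ext
      apply LinearEquiv.toLinearMap_injective
      have h2 := congrArg (fun h => h.comp T'.mkQ) hfg
      simp only [Submodule.liftQ_mkQ] at h2
      exact sub_left_inj.mp h2
    haveI : Finite (↥W ⧸ T') := Finite.of_surjective _ (Submodule.mkQ_surjective T')
    haveI : Finite ((↥W ⧸ T') →ₗ[A] ↥W) :=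
      Finite.of_injective (fun f => (f : (↥W ⧸ T') → ↥W)) DFunLike.coe_injective
    have step1 : Nat.card S ≤ Nat.card ((↥W ⧸ T') →ₗ[A] ↥W) :=
      Nat.card_le_card_of_injective _ hSinj
    have step2 : Nat.card ((↥W ⧸ T') →ₗ[A] ↥W)
        = Nat.card ((↥W ⧸ T') →ₗ[A] (Fin r → A ⧸ (𝔭 ^ N : Ideal A))) :=
      Nat.card_congr (LinearEquiv.congrRight e).toEquiv
    have step3 := aux_card_hom_pi_le h𝔭 h𝔭0 hfinpow N r (↥W ⧸ T') htQ
    omega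
  have A3 : Nat.card ↥W = Nat.card T' * Nat.card (↥W ⧸ T') :=
    Submodule.card_eq_card_quotient_mul_card T'
  have A4 : Nat.card ↥W = q ^ (N * r) := by
    rw [Nat.card_congr e.toEquiv, Nat.card_fun, aux_card_quot_pow h𝔭 h𝔭0 N]
    have hfr : Nat.card (Fin r) = r := by simp
    rw [hfr, ← pow_mul]
  have autEquiv : (↥W ≃ₗ[A] ↥W) ≃
      ((Fin r → A ⧸ (𝔭 ^ N : Ideal A)) ≃ₗ[A] (Fin r → A ⧸ (𝔭 ^ N : Ideal A))) :=
    { toFun := fun g => (e.symm.trans (g.trans e))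
      invFun := fun h => (e.trans (h.trans e.symm))
      left_inv := fun g => by
        apply LinearEquiv.toLinearMap_injective
        apply LinearMap.ext
        intro x
        simp [LinearEquiv.trans_apply]
      right_inv := fun h => by
        apply LinearEquiv.toLinearMap_injective
        apply LinearMap.ext
        intro x
        simp [LinearEquiv.trans_apply] }
  have A5 : q ^ ((N - 1) * (r * r)) ≤ Nat.card (↥W ≃ₗ[A] ↥W) := by
    rw [Nat.card_congr autEquiv]
    exact aux_card_aut_ge h𝔭 h𝔭0 hfinpow hN1 r
  have A1 := S.index_mul_card
  -- the main counting inequality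
  have hmain : Nat.card T' ^ r ≤ S.index * q ^ (r * r) := by
    obtain ⟨N', rfl⟩ : ∃ N', N = N' + 1 := ⟨N - 1, by omega⟩
    have hNsub : N' + 1 - 1 = N' := by omega
    rw [hNsub] at A5
    have key : Nat.card T' ^ r * q ^ (N' * (r * r))
        ≤ (S.index * q ^ (r * r)) * q ^ (N' * (r * r)) := by
      calc Nat.card T' ^ r * q ^ (N' * (r * r))
          ≤ Nat.card T' ^ r * Nat.card (↥W ≃ₗ[A] ↥W) := Nat.mul_le_mul_left _ A5
        _ = Nat.card T' ^ r * (S.index * Nat.card S) := by rw [A1]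
        _ ≤ Nat.card T' ^ r * (S.index * Nat.card (↥W ⧸ T') ^ r) := by
            exact Nat.mul_le_mul_left _ (Nat.mul_le_mul_left _ A2)
        _ = S.index * (Nat.card T' * Nat.card (↥W ⧸ T')) ^ r := by ring
        _ = S.index * (Nat.card ↥W) ^ r := by rw [← A3]
        _ = S.index * q ^ ((N' + 1) * r * r) := by rw [A4, ← pow_mul]
        _ = (S.index * q ^ (r * r)) * q ^ (N' * (r * r)) := by
            have hexp : (N' + 1) * r * r = r * r + N' * (r * r) := by ring
            rw [hexp, pow_add]
            ring
    exact Nat.le_of_mul_le_mul_right key (pow_pos (by omega : 0 < q) _)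
  -- injection T into T'
  have hcardTle : Nat.card T ≤ Nat.card T' := by
    refine Nat.card_le_card_of_injective
      (fun x => (⟨⟨x.1, hTN x.1 x.2⟩, Submodule.mem_comap.mpr (Submodule.subset_span x.2)⟩ :
        T')) ?_
    intro x y hxy
    apply Subtype.ext
    exact congrArg (fun z : T' => ((z : ↥W) : M)) hxy
  -- real endgame
  have hiN : (galIndex ρ (𝔭 ^ N) : ℝ) ≤ max C𝔭 1 := le_trans (hC𝔭 N hN1) (le_max_left _ _)
  have hreal : ((Nat.card T' : ℝ)) ^ r ≤ Cb * d := by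
    have h1 : Nat.card T' ^ r ≤ (d * galIndex ρ (𝔭 ^ N)) * q ^ (r * r) :=
      le_trans hmain (Nat.mul_le_mul_right _ hSle)
    have h2 : ((Nat.card T' : ℝ)) ^ r
        ≤ ((d : ℝ) * (galIndex ρ (𝔭 ^ N) : ℝ)) * (q : ℝ) ^ (r * r) := by
      exact_mod_cast h1
    calc ((Nat.card T' : ℝ)) ^ r
        ≤ ((d : ℝ) * (galIndex ρ (𝔭 ^ N) : ℝ)) * (q : ℝ) ^ (r * r) := h2
      _ ≤ ((d : ℝ) * max C𝔭 1) * (q : ℝ) ^ (r * r) := by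
          have h3 : (d : ℝ) * (galIndex ρ (𝔭 ^ N) : ℝ) ≤ (d : ℝ) * max C𝔭 1 :=
            mul_le_mul_of_nonneg_left hiN hd0
          exact mul_le_mul_of_nonneg_right h3 (by positivity)
      _ = Cb * d := by rw [hCb]; ring
  have hfinal : (Nat.card T' : ℝ) ≤ Cb ^ ((1 : ℝ) / r) * (d : ℝ) ^ ((1 : ℝ) / r) :=
    aux_real_root (Nat.cast_nonneg _) hCbpos.le hd0 hr hreal
  calc (Nat.card T : ℝ) ≤ (Nat.card T' : ℝ) := by exact_mod_cast hcardTle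
    _ ≤ _ := hfinal
end

section
/- Let K be a field, let M be a (G_K,A)-module of rank r ≥ 1, and let 𝔭 ⊆ A be a nonzero prime ideal such that there exists a constant C_𝔭 with I(𝔭^n) ≤ C_𝔭 for all n ≥ 1. For n ≥ 1 let L_n := K(M[𝔭^n]). Then there exists a constant C > 0 such that for all n ≥ 1, card(M[𝔭^∞](L_n)) ≥ C·[L_n:K]^{1/r}. -/
open Submodule

section HelperLemmas

open Polynomial

/-- Coercion lemma for the restricted automorphism. -/
lemma restrictTorsionBySet_coe {A M : Type*} [CommRing A] [AddCommGroup M] [Module A M]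
    (f : M ≃ₗ[A] M) (𝔞 : Ideal A) (x : torsionBySet A M 𝔞) :
    ((f.restrictTorsionBySet 𝔞) x : M) = f (x : M) := rfl

/-- A multiplication-by-a linear automorphism. -/
def mySmulAut {A : Type*} [CommRing A] {T : Type*} [AddCommGroup T] [Module A T]
    (a b : A) (h : ∀ y : T, (b * a) • y = y) (h' : ∀ y : T, (a * b) • y = y) : T ≃ₗ[A] T where
  toFun := fun y => a • y
  invFun := fun y => b • y
  map_add' := smul_add a
  map_smul' := fun c y => by simp only [RingHom.id_apply]; rw [smul_comm]
  left_inv := fun y => by show b • (a • y) = y; rw [smul_smul]; exact h y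
  right_inv := fun y => by show a • (b • y) = y; rw [smul_smul]; exact h' y

lemma mySmulAut_apply {A : Type*} [CommRing A] {T : Type*} [AddCommGroup T] [Module A T]
    (a b : A) (h : ∀ y : T, (b * a) • y = y) (h' : ∀ y : T, (a * b) • y = y) (y : T) :
    mySmulAut a b h h' y = a • y := rfl

/-- Counting: a chain of strictly decreasing sets gives a cardinality bound. -/
lemma chain_card {α : Type*} [Finite α] (Z : ℕ → Set α) (l : ℕ) (hl : 1 ≤ l)
    (hne : (Z l).Nonempty) (hchain : ∀ i, 1 ≤ i → i < l → Z (i + 1) ⊂ Z i) :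
    l ≤ (Z 1).ncard := by
  have main : ∀ k, k ≤ l - 1 → k + 1 ≤ (Z (l - k)).ncard := by
    intro k
    induction k with
    | zero =>
      intro _
      exact (Set.ncard_pos (Set.toFinite _)).mpr hne
    | succ k ih =>
      intro hk
      have hkk : k ≤ l - 1 := le_trans (Nat.le_succ k) hk
      have h1 : k + 1 ≤ (Z (l - k)).ncard := ih hkk
      have hstep : Z (l - k - 1 + 1) ⊂ Z (l - k - 1) := by
        apply hchain <;> omega
      have heq : l - k - 1 + 1 = l - k := by omega
      rw [heq] at hstep
      have h2 : (Z (l - k)).ncard < (Z (l - k - 1)).ncard :=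
        Set.ncard_lt_ncard hstep (Set.toFinite _)
      have : l - (k + 1) = l - k - 1 := by omega
      rw [this]
      omega
  have := main (l - 1) le_rfl
  have heq : l - (l - 1) = 1 := by omega
  rw [heq] at this
  omega

/-- Automorphism group of a module isomorphic to `(A ⧸ 𝔞)^r` has at most `|T|^r` elements. -/
lemma aut_card_le {A : Type*} [CommRing A] (𝔞 : Ideal A) {T : Type*} [AddCommGroup T] [Module A T]
    [Finite T] (r : ℕ) (e : T ≃ₗ[A] (Fin r → A ⧸ 𝔞)) :
    Nat.card (T ≃ₗ[A] T) ≤ Nat.card T ^ r := by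
  have key : ∀ v : T, ∃ a : Fin r → A, v = ∑ i, a i • e.symm (Pi.single i (1 : A ⧸ 𝔞)) := by
    intro v
    have hsurj : ∀ z : A ⧸ 𝔞, ∃ a : A, a • (1 : A ⧸ 𝔞) = z := by
      intro z
      obtain ⟨a, rfl⟩ := Ideal.Quotient.mk_surjective z
      exact ⟨a, by rw [Algebra.smul_def, Ideal.Quotient.algebraMap_eq, mul_one]⟩
    choose a ha using fun i => hsurj (e v i)
    refine ⟨a, ?_⟩
    have hev : e v = ∑ i, a i • (Pi.single i (1 : A ⧸ 𝔞) : Fin r → A ⧸ 𝔞) := by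
      funext j
      simp only [Finset.sum_apply, Pi.smul_apply]
      rw [Finset.sum_eq_single j (fun i _ hij => by rw [Pi.single_eq_of_ne hij.symm, smul_zero])
        (fun h => absurd (Finset.mem_univ j) h)]
      rw [Pi.single_eq_same, ha j]
    calc v = e.symm (e v) := (e.symm_apply_apply v).symm
      _ = e.symm (∑ i, a i • (Pi.single i (1 : A ⧸ 𝔞) : Fin r → A ⧸ 𝔞)) := by rw [← hev]
      _ = ∑ i, a i • e.symm (Pi.single i (1 : A ⧸ 𝔞)) := by rw [map_sum]; simp only [map_smul]
  have hinj : Function.Injective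
      (fun f : T ≃ₗ[A] T => fun i : Fin r => f (e.symm (Pi.single i (1 : A ⧸ 𝔞)))) := by
    intro f g hfg
    apply DFunLike.ext
    intro v
    obtain ⟨a, rfl⟩ := key v
    rw [map_sum, map_sum]
    refine Finset.sum_congr rfl fun i _ => ?_
    have h2 := congrFun hfg i
    dsimp only at h2
    rw [map_smul, map_smul, h2]
  calc Nat.card (T ≃ₗ[A] T) ≤ Nat.card (Fin r → T) := Nat.card_le_card_of_injective _ hinj
    _ = Nat.card T ^ r := by rw [Nat.card_fun]; simp [Nat.card_eq_fintype_card]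

/-- In a Galois extension, an element fixed by the whole fixing subgroup of `F` lies in `F`. -/
lemma mem_of_fixedAux {K Ksep : Type*} [Field K] [Field Ksep] [Algebra K Ksep] [IsGalois K Ksep]
    (F : IntermediateField K Ksep) (x : Ksep) (hx : ∀ σ ∈ F.fixingSubgroup, σ x = x) : x ∈ F := by
  have hfix : ∀ τ : Ksep ≃ₐ[↥F] Ksep, τ x = x := by
    intro τ
    have hmem : (τ.restrictScalars K) ∈ F.fixingSubgroup := by
      rw [IntermediateField.mem_fixingSubgroup_iff]
      intro y hy
      have : τ (algebraMap (↥F) Ksep ⟨y, hy⟩) = algebraMap (↥F) Ksep ⟨y, hy⟩ := τ.commutes _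
      simpa [IntermediateField.algebraMap_apply] using this
    exact hx _ hmem
  by_contra hxF
  have hnormal : Normal (↥F) Ksep := inferInstance
  have hint : IsIntegral (↥F) x := hnormal.isIntegral x
  have hdeg : (minpoly (↥F) x).natDegree ≠ 1 := by
    intro h1
    obtain ⟨y, hy⟩ := minpoly.natDegree_eq_one_iff.mp h1
    apply hxF
    have : (y : Ksep) = x := by rw [← hy]; rfl
    exact this ▸ y.2
  have hdeg2 : 2 ≤ (minpoly (↥F) x).natDegree := by
    have := minpoly.natDegree_pos hint; omega
  have hsplits : ((minpoly (↥F) x).map (algebraMap (↥F) Ksep)).Splits := hnormal.splits x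
  have hsep : (minpoly (↥F) x).Separable := Algebra.IsSeparable.isSeparable (↥F) x
  set q := (minpoly (↥F) x).map (algebraMap (↥F) Ksep) with hq
  have hq0 : q ≠ 0 := Polynomial.map_ne_zero (minpoly.ne_zero hint)
  have hcard : 2 ≤ q.roots.card := by
    rw [← hsplits.natDegree_eq_card_roots, hq, Polynomial.natDegree_map]; exact hdeg2
  have hnodup : q.roots.Nodup := Polynomial.nodup_roots (hsep.map)
  have hxroot : x ∈ q.roots := by
    rw [Polynomial.mem_roots']
    refine ⟨hq0, ?_⟩
    show q.eval x = 0
    rw [hq, Polynomial.eval_map, ← Polynomial.aeval_def, minpoly.aeval]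
  have hex : ∃ y ∈ q.roots, y ≠ x := by
    by_contra hall
    push_neg at hall
    classical
    have hcount : Multiset.count x q.roots = q.roots.card :=
      Multiset.count_eq_card.mpr fun z hz => (hall z hz).symm
    have hle1 : Multiset.count x q.roots ≤ 1 := Multiset.nodup_iff_count_le_one.mp hnodup x
    omega
  obtain ⟨y, hyroot, hyx⟩ := hex
  have hyev : Polynomial.aeval y (minpoly (↥F) x) = 0 := by
    have := (Polynomial.mem_roots'.mp hyroot).2
    rwa [hq, Polynomial.IsRoot, Polynomial.eval_map, ← Polynomial.aeval_def] at this
  obtain ⟨σ, hσ⟩ := minpoly.exists_algEquiv_of_root' (hint.isAlgebraic) hyev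
  exact hyx (hσ.symm.trans (hfix σ))

section KeyLevel

variable {A : Type*} [CommRing A] [IsDomain A] [IsDedekindDomain A]
variable {K Ksep : Type*} [Field K] [Field Ksep] [Algebra K Ksep]
variable {M : Type*} [AddCommGroup M] [Module A M]

/-- If `x` has exact annihilator `𝔭 ^ l` and is fixed by a subgroup `N`, then
`l` is at most the index of the image of `N` in `Aut(M[𝔭^l])`. -/
lemma key_level (ρ : (Ksep ≃ₐ[K] Ksep) →* (M ≃ₗ[A] M))
    (𝔭 : Ideal A) (h𝔭 : 𝔭.IsPrime) (h𝔭0 : 𝔭 ≠ ⊥)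
    (x : M) (l : ℕ) (hl : 1 ≤ l) (htor : Ideal.torsionOf A M x = 𝔭 ^ l)
    [Finite (torsionBySet A M ((𝔭 ^ l : Ideal A) : Set A))]
    (N : Subgroup (Ksep ≃ₐ[K] Ksep)) (hfix : ∀ σ ∈ N, ρ σ x = x) :
    l ≤ (Subgroup.map (galRep ρ (𝔭 ^ l)) N).index := by
  set T := torsionBySet A M ((𝔭 ^ l : Ideal A) : Set A) with hT
  have hxT : x ∈ T := by
    rw [hT, mem_torsionBySet_iff]
    rintro ⟨a, ha⟩
    have haa : a ∈ Ideal.torsionOf A M x := by rw [htor]; exact ha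
    exact (Ideal.mem_torsionOf_iff x a).mp haa
  set x' : ↥T := ⟨x, hxT⟩ with hx'
  have hsc : ∀ d : A, d - 1 ∈ 𝔭 ^ l → ∀ y : ↥T, d • y = y := by
    intro d hd y
    have h1 : (d - 1) • (y : M) = 0 := (mem_torsionBySet_iff _ _).mp y.2 ⟨d - 1, hd⟩
    apply Subtype.ext
    have h2 : d • (y : M) - (1 : A) • (y : M) = 0 := by rw [← sub_smul]; exact h1
    rw [one_smul] at h2
    exact sub_eq_zero.mp h2
  have hinv : ∀ c : A, c ∈ 𝔭 → ∃ g : ↥T ≃ₗ[A] ↥T, ∀ y, g y = (1 + c) • y := by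
    intro c hc
    have hnm : (1 + c) ∉ 𝔭 := by
      intro h
      have h1 : (1 : A) ∈ 𝔭 := by simpa using 𝔭.sub_mem h hc
      exact h𝔭.ne_top ((Ideal.eq_top_iff_one 𝔭).mpr h1)
    have hmax : 𝔭.IsMaximal := h𝔭.isMaximal h𝔭0
    obtain ⟨u, i, hi𝔭, hui⟩ := hmax.exists_inv hnm
    have hcop : IsCoprime (Ideal.span {1 + c}) 𝔭 := by
      rw [Ideal.isCoprime_iff_sup_eq, Ideal.eq_top_iff_one]
      have hm : u * (1 + c) ∈ Ideal.span {1 + c} := Ideal.mem_span_singleton'.mpr ⟨u, rfl⟩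
      have hsum := Submodule.add_mem_sup hm hi𝔭
      rwa [hui] at hsum
    have hcopl := hcop.pow_right (n := l)
    rw [Ideal.isCoprime_iff_sup_eq] at hcopl
    have h1 : (1 : A) ∈ Ideal.span {1 + c} ⊔ 𝔭 ^ l := by rw [hcopl]; trivial
    obtain ⟨u', hu', v, hv, huv⟩ := Submodule.mem_sup.mp h1
    obtain ⟨b, rfl⟩ := Ideal.mem_span_singleton'.mp hu'
    have hb : b * (1 + c) - 1 ∈ 𝔭 ^ l := by
      have hveq : b * (1 + c) - 1 = -v := by linear_combination huv
      rw [hveq]; exact neg_mem hv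
    have hb' : (1 + c) * b - 1 ∈ 𝔭 ^ l := by rwa [mul_comm] at hb
    exact ⟨mySmulAut (1 + c) b (fun y => hsc _ hb y) (fun y => hsc _ hb' y), fun y => rfl⟩
  let W : Subgroup (↥T ≃ₗ[A] ↥T) :=
    { carrier := {g | g x' = x'}
      one_mem' := rfl
      mul_mem' := by
        intro g g' hg hg'
        show g (g' x') = x'
        rw [show g' x' = x' from hg', show g x' = x' from hg]
      inv_mem' := by
        intro g hg
        show g.symm x' = x'
        conv_lhs => rw [show x' = g x' from hg.symm]
        exact g.symm_apply_apply x' }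
  have hWmem : ∀ g : ↥T ≃ₗ[A] ↥T, g ∈ W ↔ g x' = x' := fun g => Iff.rfl
  have hchain : ∀ i, 1 ≤ i → i < l →
      ((fun c : A => c • x') '' (((𝔭 ^ (i + 1) : Ideal A) : Set A)))
        ⊂ ((fun c : A => c • x') '' (((𝔭 ^ i : Ideal A) : Set A))) := by
    intro i hi1 hil
    constructor
    · exact Set.image_mono (Ideal.pow_le_pow_right (Nat.le_succ i))
    · intro hcontra
      have hle : 𝔭 ^ i ≤ 𝔭 ^ (i + 1) := by
        intro c hc
        obtain ⟨c', hc', hcc⟩ := hcontra ⟨c, hc, rfl⟩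
        have hsub : (c - c') • x = 0 := by
          have h0 : c' • x = c • x := congrArg Subtype.val hcc
          rw [sub_smul, h0, sub_self]
        have hmem : c - c' ∈ 𝔭 ^ l := by
          rw [← htor]; exact (Ideal.mem_torsionOf_iff x _).mpr hsub
        have hmem2 : c - c' ∈ 𝔭 ^ (i + 1) := Ideal.pow_le_pow_right hil hmem
        have hsum := add_mem hmem2 (SetLike.mem_coe.mp hc')
        simpa using hsum
      exact ((Ideal.pow_right_strictAnti 𝔭 h𝔭0 h𝔭.ne_top) (Nat.lt_succ_self i)).not_ge hle
  have hZl : ((fun c : A => c • x') '' (((𝔭 ^ l : Ideal A) : Set A))).Nonempty :=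
    ⟨(0 : A) • x', ⟨0, (𝔭 ^ l).zero_mem, rfl⟩⟩
  have hlZ : l ≤ ((fun c : A => c • x') '' (((𝔭 ^ 1 : Ideal A) : Set A))).ncard := by
    have := chain_card (fun i => (fun c : A => c • x') '' (((𝔭 ^ i : Ideal A) : Set A)))
      l hl hZl hchain
    simpa using this
  have hgz : ∀ z : ↥((fun c : A => c • x') '' (((𝔭 ^ 1 : Ideal A) : Set A))),
      ∃ g : ↥T ≃ₗ[A] ↥T, g x' = x' + (z : ↥T) := by
    intro z
    obtain ⟨c, hc, hcz⟩ := z.2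
    have hc𝔭 : c ∈ 𝔭 := by
      have := SetLike.mem_coe.mp hc
      rwa [pow_one] at this
    obtain ⟨g, hg⟩ := hinv c hc𝔭
    refine ⟨g, ?_⟩
    have hcz' : c • x' = (z : ↥T) := hcz
    rw [hg x', add_smul, one_smul, hcz']
  choose g hg using hgz
  have hinj : Function.Injective
      (fun z : ↥((fun c : A => c • x') '' (((𝔭 ^ 1 : Ideal A) : Set A))) =>
        (QuotientGroup.mk (g z) : _ ⧸ W)) := by
    intro z z' hzz
    have hw : (g z)⁻¹ * (g z') ∈ W := QuotientGroup.eq.mp hzz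
    have hw0 : ((g z)⁻¹ * (g z')) x' = x' := hw
    have hweq : (g z') x' = (g z) x' := by
      have hr : ((g z)⁻¹ * (g z')) x' = (g z).symm ((g z') x') := rfl
      rw [hr] at hw0
      have := congrArg (g z) hw0
      rwa [(g z).apply_symm_apply] at this
    rw [hg z, hg z'] at hweq
    exact (Subtype.ext (add_left_cancel hweq)).symm
  haveI hfin : Finite (↥T ≃ₗ[A] ↥T) :=
    Finite.of_injective (fun f => (f : ↥T → ↥T)) DFunLike.coe_injective
  haveI : Finite ((↥T ≃ₗ[A] ↥T) ⧸ W) := Quotient.finite _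
  have hcard1 : Nat.card ↥((fun c : A => c • x') '' (((𝔭 ^ 1 : Ideal A) : Set A)))
      ≤ Nat.card ((↥T ≃ₗ[A] ↥T) ⧸ W) :=
    Nat.card_le_card_of_injective _ hinj
  have hWind : l ≤ W.index := by
    rw [Subgroup.index_eq_card]
    calc l ≤ ((fun c : A => c • x') '' (((𝔭 ^ 1 : Ideal A) : Set A))).ncard := hlZ
      _ = Nat.card ↥((fun c : A => c • x') '' (((𝔭 ^ 1 : Ideal A) : Set A))) :=
        (Nat.card_coe_set_eq _).symm
      _ ≤ _ := hcard1
  have hmapW : Subgroup.map (galRep ρ (𝔭 ^ l)) N ≤ W := by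
    rintro _ ⟨σ, hσ, rfl⟩
    show (galRep ρ (𝔭 ^ l)) σ x' = x'
    apply Subtype.ext
    show ρ σ x = x
    exact hfix σ hσ
  have hind : W.index ∣ (Subgroup.map (galRep ρ (𝔭 ^ l)) N).index :=
    Subgroup.index_dvd_of_le hmapW
  have hpos : 0 < (Subgroup.map (galRep ρ (𝔭 ^ l)) N).index :=
    Nat.pos_of_ne_zero Subgroup.index_ne_zero_of_finite
  exact le_trans hWind (Nat.le_of_dvd hpos hind)

end KeyLevel

/-- Membership in a fixed field. -/
lemma mem_fixedField_iff'' {K L : Type*} [Field K] [Field L] [Algebra K L]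
    (H : Subgroup (L ≃ₐ[K] L)) (x : L) :
    x ∈ IntermediateField.fixedField H ↔ ∀ σ ∈ H, σ x = x := by
  constructor
  · intro hx σ hσ; exact hx ⟨σ, hσ⟩
  · intro hx g; exact hx g g.2

end HelperLemmas



set_option maxHeartbeats 1600000 in
set_option synthInstance.maxHeartbeats 400000 in
/-- **Theorem (sharpness of the prime-power torsion bound).**
Let `K` be a field and `M` a `(G_K, A)`-module of rank `r ≥ 1`, where `A` is a Dedekind
domain, not a field, all of whose proper quotients are finite. Let `𝔭 ⊆ A` be a nonzero
prime ideal with indices `I(𝔭^n)` bounded by a constant `C𝔭`. For `n ≥ 1` let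
`L_n = K(M[𝔭^n])`. Then there is a constant `C > 0` such that
`|M[𝔭^∞](L_n)| ≥ C · [L_n:K] ^ (1/r)` for all `n ≥ 1`. -/
theorem primePowerTorsion_bound_sharp
    {A : Type*} [CommRing A] [IsDomain A] [IsDedekindDomain A] (hA : ¬IsField A)
    (hAfin : ∀ 𝔞 : Ideal A, 𝔞 ≠ ⊥ → Finite (A ⧸ 𝔞))
    {K Ksep : Type*} [Field K] [Field Ksep] [Algebra K Ksep] [IsSepClosure K Ksep]
    {M : Type*} [AddCommGroup M] [Module A M]
    (ρ : (Ksep ≃ₐ[K] Ksep) →* (M ≃ₗ[A] M)) (r : ℕ) (hr : 1 ≤ r)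
    (hGM : IsGaloisModule ρ r)
    (𝔭 : Ideal A) (h𝔭 : 𝔭.IsPrime) (h𝔭0 : 𝔭 ≠ ⊥)
    (C𝔭 : ℝ) (hC𝔭 : ∀ n : ℕ, 1 ≤ n → (galIndex ρ (𝔭 ^ n) : ℝ) ≤ C𝔭) :
    ∃ C : ℝ, 0 < C ∧ ∀ n : ℕ, 1 ≤ n →
      letI Ln : IntermediateField K Ksep :=
        fieldGenBy ρ ((torsionBySet A M ((𝔭 ^ n : Ideal A) : Set A) : Submodule A M) : Set M)
      C * (Module.finrank K Ln : ℝ) ^ ((1 : ℝ) / r)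
        ≤ (Nat.card (galPoints ρ Ln
            {x : M | ∃ m : ℕ, 1 ≤ m ∧ x ∈ torsionBySet A M ((𝔭 ^ m : Ideal A) : Set A)}) : ℝ) := by
  classical
  refine ⟨1, one_pos, ?_⟩
  intro n hn
  -- basic facts
  have h𝔞0 : ∀ m : ℕ, (𝔭 ^ m : Ideal A) ≠ ⊥ := by
    intro m
    have := pow_ne_zero m h𝔭0
    simpa using this
  have hfinT : ∀ m : ℕ, Finite ↥(torsionBySet A M ((𝔭 ^ m : Ideal A) : Set A)) := by
    intro m
    obtain ⟨e⟩ := hGM.rankEq (𝔭 ^ m) (h𝔞0 m)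
    haveI := hAfin (𝔭 ^ m) (h𝔞0 m)
    exact Finite.of_equiv _ e.toEquiv.symm
  haveI instTn : Finite ↥(torsionBySet A M ((𝔭 ^ n : Ideal A) : Set A)) := hfinT n
  set Tn : Submodule A M := torsionBySet A M ((𝔭 ^ n : Ideal A) : Set A) with hTn
  set N : Subgroup (Ksep ≃ₐ[K] Ksep) := fixingSubgroupOf ρ ((Tn : Submodule A M) : Set M)
    with hNdef
  -- N is the kernel of the mod-𝔭^n representation
  have hNker : N = (galRep ρ (𝔭 ^ n)).ker := by
    ext σ
    rw [MonoidHom.mem_ker]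
    constructor
    · intro hσ
      apply DFunLike.ext
      intro y
      apply Subtype.ext
      show ρ σ (y : M) = (y : M)
      exact hσ (y : M) y.2
    · intro hσ y hy
      exact congrArg Subtype.val (DFunLike.congr_fun hσ (⟨y, hy⟩ : ↥Tn))
  -- N is open
  have hNopen : IsOpen (N : Set (Ksep ≃ₐ[K] Ksep)) := by
    have heq : (N : Set (Ksep ≃ₐ[K] Ksep)) =
        ⋂ y : ↥Tn, {σ : Ksep ≃ₐ[K] Ksep | ρ σ (y : M) = (y : M)} := by
      ext σ
      simp only [Set.mem_iInter, Set.mem_setOf_eq, SetLike.mem_coe]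
      constructor
      · intro hσ y; exact hσ (y : M) y.2
      · intro hσ y hy; exact hσ ⟨y, hy⟩
    rw [heq]
    refine isOpen_iInter_of_finite fun y => ?_
    apply hGM.openStab
    obtain ⟨a, ha, ha0⟩ := Submodule.exists_mem_ne_zero_of_ne_bot (h𝔞0 n)
    rw [Submodule.mem_torsion_iff]
    refine ⟨⟨a, mem_nonZeroDivisors_of_ne_zero ha0⟩, ?_⟩
    show a • (y : M) = 0
    exact (mem_torsionBySet_iff _ _).mp y.2 ⟨a, ha⟩
  -- a finite Galois subextension whose fixing subgroup is inside N
  have hNnhds : (N : Set (Ksep ≃ₐ[K] Ksep)) ∈ nhds (1 : Ksep ≃ₐ[K] Ksep) :=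
    hNopen.mem_nhds N.one_mem
  obtain ⟨E, hEfd, hEN⟩ := (krullTopology_mem_nhds_one_iff K Ksep _).mp hNnhds
  haveI := hEfd
  set F : IntermediateField K Ksep := IntermediateField.normalClosure K ↥E Ksep with hF
  haveI hFfd : FiniteDimensional K ↥F := normalClosure.is_finiteDimensional K ↥E Ksep
  haveI hFnormal : Normal K ↥F := normalClosure.normal K ↥E Ksep
  haveI hFgalois : IsGalois K ↥F :=
    { to_isSeparable := Algebra.isSeparable_tower_bot_of_isSeparable K (↥F) Ksep
      to_normal := hFnormal }
  have hFN : F.fixingSubgroup ≤ N := by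
    intro σ hσ
    exact hEN (IntermediateField.fixingSubgroup_le (IntermediateField.le_normalClosure E) hσ)
  -- restriction to F
  set π : (Ksep ≃ₐ[K] Ksep) →* (↥F ≃ₐ[K] ↥F) := AlgEquiv.restrictNormalHom ↥F with hπ
  have hπsurj : Function.Surjective π := AlgEquiv.restrictNormalHom_surjective Ksep
  have hπcomm : ∀ (σ : Ksep ≃ₐ[K] Ksep) (y : ↥F), ((π σ) y : Ksep) = σ (y : Ksep) := by
    intro σ y
    rw [hπ]
    exact AlgEquiv.restrictNormalHom_apply F σ y
  have hπker : π.ker = F.fixingSubgroup := by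
    ext σ
    rw [MonoidHom.mem_ker, IntermediateField.mem_fixingSubgroup_iff]
    constructor
    · intro h1 y hy
      have h2 := hπcomm σ ⟨y, hy⟩
      rw [h1] at h2
      simpa using h2.symm
    · intro h1
      apply AlgEquiv.ext
      intro y
      have h2 := hπcomm σ y
      rw [h1 (y : Ksep) y.2] at h2
      exact Subtype.ext h2
  set N' : Subgroup (↥F ≃ₐ[K] ↥F) := Subgroup.map π N with hN'
  have hNcomap : Subgroup.comap π N' = N := by
    rw [hN', Subgroup.comap_map_eq, hπker, sup_eq_left.mpr hFN]
  set Ln' : IntermediateField K ↥F := IntermediateField.fixedField N' with hLn'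
  -- identify the fixed field of N with the image of Ln'
  have hLnF : ∀ x : Ksep, x ∈ IntermediateField.fixedField N → x ∈ F := by
    intro x hx
    exact mem_of_fixedAux F x
      (fun σ hσ => (mem_fixedField_iff'' N x).mp hx σ (hFN hσ))
  have hmapeq : IntermediateField.fixedField N = IntermediateField.map F.val Ln' := by
    ext x
    constructor
    · intro hx
      have hxF : x ∈ F := hLnF x hx
      have hmem : (⟨x, hxF⟩ : ↥F) ∈ Ln' := by
        rw [hLn', mem_fixedField_iff'']
        rintro τ' ⟨σ, hσ, rfl⟩
        have h2 := hπcomm σ ⟨x, hxF⟩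
        rw [(mem_fixedField_iff'' N x).mp hx σ hσ] at h2
        exact Subtype.ext h2
      exact ⟨⟨x, hxF⟩, hmem, rfl⟩
    · rintro ⟨y, hy, rfl⟩
      refine (mem_fixedField_iff'' _ _).mpr fun σ hσ => ?_
      have h1 := hπcomm σ y
      have hy' : y ∈ IntermediateField.fixedField N' := hy
      have h2 := (mem_fixedField_iff'' N' y).mp hy' (π σ) (Subgroup.mem_map_of_mem π hσ)
      rw [h2] at h1
      exact h1.symm
  -- the finite Galois correspondence
  have hNfix : IntermediateField.fixingSubgroup Ln' = N' :=
    IntermediateField.fixingSubgroup_fixedField N'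
  have hfg : Module.finrank K ↥Ln' * Module.finrank ↥Ln' ↥F = Module.finrank K ↥F :=
    Module.finrank_mul_finrank K ↥Ln' ↥F
  letI := AlgEquiv.fintype K ↥F
  have hcardN' : Nat.card ↥N' = Module.finrank ↥Ln' ↥F := by
    rw [← hNfix]
    exact IsGalois.card_fixingSubgroup_eq_finrank Ln'
  have hcardG : Nat.card (↥F ≃ₐ[K] ↥F) = Module.finrank K ↥F := by
    exact IsGalois.card_aut_eq_finrank K ↥F
  have hlag : N'.index * Nat.card ↥N' = Nat.card (↥F ≃ₐ[K] ↥F) := Subgroup.index_mul_card N'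
  have hfpos : 0 < Module.finrank ↥Ln' ↥F := by
    haveI : Module.Finite ↥Ln' ↥F := FiniteDimensional.right K ↥Ln' ↥F
    exact Module.finrank_pos
  have hdN' : Module.finrank K ↥Ln' = N'.index := by
    rw [hcardN', hcardG] at hlag
    exact Nat.eq_of_mul_eq_mul_right hfpos (hfg.trans hlag.symm)
  have hN'N : N'.index = N.index := by
    rw [hN', Subgroup.index_map, hπker, sup_eq_left.mpr hFN,
      MonoidHom.range_eq_top.mpr hπsurj, Subgroup.index_top, mul_one]
  -- bounding the degree
  obtain ⟨e⟩ := hGM.rankEq (𝔭 ^ n) (h𝔞0 n)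
  haveI := hAfin (𝔭 ^ n) (h𝔞0 n)
  haveI hfinAut : Finite (↥Tn ≃ₗ[A] ↥Tn) :=
    Finite.of_injective (fun f => (f : ↥Tn → ↥Tn)) DFunLike.coe_injective
  have hAutle : Nat.card (↥Tn ≃ₗ[A] ↥Tn) ≤ Nat.card ↥Tn ^ r := aut_card_le (𝔭 ^ n) r e
  have hranle : Nat.card ↥((galRep ρ (𝔭 ^ n)).range) ≤ Nat.card (↥Tn ≃ₗ[A] ↥Tn) :=
    Nat.card_le_card_of_injective Subtype.val Subtype.val_injective
  have hNind : N.index = Nat.card ↥((galRep ρ (𝔭 ^ n)).range) := by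
    rw [hNker]; exact Subgroup.index_ker _
  set Ln : IntermediateField K Ksep :=
    fieldGenBy ρ ((Tn : Submodule A M) : Set M) with hLndef
  have hLnfixed : Ln = IntermediateField.fixedField N := rfl
  have hfr : Module.finrank K ↥Ln = Module.finrank K ↥Ln' := by
    rw [hLnfixed, hmapeq]
    exact (LinearEquiv.finrank_eq (IntermediateField.equivMap Ln' F.val).toLinearEquiv).symm
  have hd : Module.finrank K ↥Ln ≤ Nat.card ↥Tn ^ r := by
    rw [hfr, hdN', hN'N, hNind]
    exact le_trans hranle hAutle
  -- the fixing subgroup of Ln is N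
  have hNle : N ≤ Ln.fixingSubgroup := (IntermediateField.le_iff_le N Ln).mp (le_of_eq hLnfixed)
  have hLnN : Ln.fixingSubgroup ≤ N := by
    intro σ hσ
    rw [← hNcomap]
    show π σ ∈ N'
    rw [← hNfix, IntermediateField.mem_fixingSubgroup_iff]
    intro y hy
    have h1 := hπcomm σ y
    have hymem : (y : Ksep) ∈ Ln := by
      rw [hLnfixed, hmapeq]
      exact ⟨y, hy, rfl⟩
    have h2 : σ (y : Ksep) = (y : Ksep) := by
      rw [IntermediateField.mem_fixingSubgroup_iff] at hσ
      exact hσ (y : Ksep) hymem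
    exact Subtype.ext (h1.trans h2)
  -- Tn is contained in the rational points
  set gp : Set M := galPoints ρ Ln
    {x : M | ∃ m : ℕ, 1 ≤ m ∧ x ∈ torsionBySet A M ((𝔭 ^ m : Ideal A) : Set A)} with hgp
  have hTsub : ((Tn : Submodule A M) : Set M) ⊆ gp := by
    intro x hx
    exact ⟨⟨n, hn, hx⟩, fun σ hσ => (hLnN hσ) x hx⟩
  -- rational points are contained in a fixed torsion submodule
  set R : ℝ := (N.index : ℝ) * C𝔭 with hR
  set m₀ : ℕ := max 1 ⌈R⌉₊ with hm₀
  have hgsub : gp ⊆ ((torsionBySet A M ((𝔭 ^ m₀ : Ideal A) : Set A) : Submodule A M) : Set M) := by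
    rintro x ⟨⟨m, hm, hxm⟩, hfixx⟩
    have hJle : 𝔭 ^ m ≤ Ideal.torsionOf A M x := by
      intro a ha
      rw [Ideal.mem_torsionOf_iff]
      exact (mem_torsionBySet_iff _ _).mp hxm ⟨a, ha⟩
    have hdvd : Ideal.torsionOf A M x ∣ 𝔭 ^ m := Ideal.dvd_iff_le.mpr hJle
    obtain ⟨i, him, hassoc⟩ := (dvd_prime_pow (Ideal.prime_of_isPrime h𝔭0 h𝔭) m).mp hdvd
    have hJeq : Ideal.torsionOf A M x = 𝔭 ^ i := associated_iff_eq.mp hassoc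
    have hxTi : ∀ a ∈ 𝔭 ^ i, a • x = 0 := by
      intro a ha
      exact (Ideal.mem_torsionOf_iff x a).mp (hJeq ▸ ha)
    rcases Nat.eq_zero_or_pos i with hi0 | hipos
    · have h1 : (1 : A) • x = 0 := hxTi 1 (by rw [hi0, pow_zero, Ideal.one_eq_top]; exact Submodule.mem_top)
      rw [one_smul] at h1
      rw [SetLike.mem_coe, h1]
      exact (torsionBySet A M _).zero_mem
    · haveI := hfinT i
      have hkey := key_level ρ 𝔭 h𝔭 h𝔭0 x i hipos hJeq N (fun σ hσ => hfixx σ (hNle hσ))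
      have hNind0 : N.index ≠ 0 := by
        rw [hNind]
        haveI : Finite ↥((galRep ρ (𝔭 ^ n)).range) := Subtype.finite
        exact Nat.card_pos.ne'
      have hmap : (Subgroup.map (galRep ρ (𝔭 ^ i)) N).index ≤ N.index * galIndex ρ (𝔭 ^ i) := by
        rw [Subgroup.index_map]
        have h1 : (N ⊔ (galRep ρ (𝔭 ^ i)).ker).index ∣ N.index :=
          Subgroup.index_dvd_of_le le_sup_left
        exact Nat.mul_le_mul_right _ (Nat.le_of_dvd (Nat.pos_of_ne_zero hNind0) h1)
      have hiR : (i : ℝ) ≤ R := by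
        have h2 : i ≤ N.index * galIndex ρ (𝔭 ^ i) := le_trans hkey hmap
        have h3 : (i : ℝ) ≤ (N.index : ℝ) * (galIndex ρ (𝔭 ^ i) : ℝ) := by exact_mod_cast h2
        exact le_trans h3 (mul_le_mul_of_nonneg_left (hC𝔭 i hipos) (Nat.cast_nonneg _))
      have him₀ : i ≤ m₀ := by
        have h4 : (i : ℝ) ≤ (⌈R⌉₊ : ℝ) := le_trans hiR (Nat.le_ceil R)
        have h5 : i ≤ ⌈R⌉₊ := by exact_mod_cast h4
        exact le_trans h5 (le_max_right _ _)
      rw [SetLike.mem_coe, mem_torsionBySet_iff]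
      rintro ⟨a, ha⟩
      exact hxTi a (Ideal.pow_le_pow_right him₀ ha)
  have hgfin : gp.Finite :=
    (Set.finite_coe_iff.mp (hfinT m₀)).subset hgsub
  have hcard : Nat.card ↥Tn ≤ Nat.card ↥gp := by
    have h1 : Nat.card ↥Tn = ((Tn : Submodule A M) : Set M).ncard := Nat.card_coe_set_eq _
    have h2 : Nat.card ↥gp = gp.ncard := Nat.card_coe_set_eq _
    rw [h1, h2]
    exact Set.ncard_le_ncard hTsub hgfin
  -- numeric conclusion
  have hfinal : (1 : ℝ) * (Module.finrank K ↥Ln : ℝ) ^ ((1 : ℝ) / r) ≤ (Nat.card ↥gp : ℝ) := by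
    rw [one_mul]
    have hdc : (Module.finrank K ↥Ln : ℝ) ≤ (Nat.card ↥gp : ℝ) ^ (r : ℕ) := by
      have h1 : Module.finrank K ↥Ln ≤ Nat.card ↥gp ^ r :=
        le_trans hd (Nat.pow_le_pow_left hcard r)
      exact_mod_cast h1
    have h0c : (0 : ℝ) ≤ (Nat.card ↥gp : ℝ) := Nat.cast_nonneg _
    have hr0 : (r : ℝ) ≠ 0 := Nat.cast_ne_zero.mpr (by omega)
    calc (Module.finrank K ↥Ln : ℝ) ^ ((1 : ℝ) / r)
        ≤ ((Nat.card ↥gp : ℝ) ^ (r : ℕ)) ^ ((1 : ℝ) / r) :=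
          Real.rpow_le_rpow (Nat.cast_nonneg _) hdc (by positivity)
      _ = ((Nat.card ↥gp : ℝ) ^ ((r : ℕ) : ℝ)) ^ ((1 : ℝ) / r) := by rw [Real.rpow_natCast]
      _ = (Nat.card ↥gp : ℝ) ^ (((r : ℕ) : ℝ) * ((1 : ℝ) / r)) := by rw [← Real.rpow_mul h0c]
      _ = (Nat.card ↥gp : ℝ) ^ (1 : ℝ) := by rw [mul_one_div, div_self hr0]
      _ = (Nat.card ↥gp : ℝ) := Real.rpow_one _
  exact hfinal
end

section
/- Let A be a Dedekind domain which is not a field such that A/𝔞 is finite for every nonzero ideal 𝔞 ⊆ A, let 𝔞 ⊆ A be a nonzero ideal, and let r ≥ 1. Then the group GL_r(A/𝔞) of invertible r×r matrices over A/𝔞 is finite of cardinality card(GL_r(A/𝔞)) = |𝔞|^{r²}·∏_{𝔭 | 𝔞} ∏_{i=1}^{r} (1 - |𝔭|^{-i}), the outer product being over the (finitely many) nonzero prime ideals 𝔭 dividing 𝔞 (an equality of real numbers). -/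
/-- The absolute norm `|𝔞|` of an ideal `𝔞 ⊆ A`: the cardinality of `A ⧸ 𝔞`. -/
noncomputable def idealNorm {A : Type*} [CommRing A] (𝔞 : Ideal A) : ℕ := Nat.card (A ⧸ 𝔞)

/-- The set of nonzero prime ideals of `A` dividing `𝔞`. -/
def primesDvd {A : Type*} [CommRing A] (𝔞 : Ideal A) : Set (Ideal A) :=
  {𝔭 | 𝔭.IsPrime ∧ 𝔭 ≠ ⊥ ∧ 𝔭 ∣ 𝔞}

/-- `θ(𝔞) = ∏_{𝔭 ∣ 𝔞} (1 - 1/|𝔭|)⁻¹`, the product over the nonzero primes dividing `𝔞`. -/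
noncomputable def theta {A : Type*} [CommRing A] (𝔞 : Ideal A) : ℝ :=
  ∏ᶠ 𝔭 ∈ primesDvd 𝔞, (1 - (idealNorm 𝔭 : ℝ)⁻¹)⁻¹

/-- Units of a pi monoid are the pi of units. -/
def piUnitsEquiv {ι : Type*} (M : ι → Type*) [∀ i, Monoid (M i)] :
    (∀ i, M i)ˣ ≃ ∀ i, (M i)ˣ where
  toFun u i := ⟨u.val i, u.inv i, congrFun u.val_inv i, congrFun u.inv_val i⟩
  invFun f := ⟨fun i => f i, fun i => ((f i)⁻¹ : (M i)ˣ),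
    funext fun i => (f i).val_inv, funext fun i => (f i).inv_val⟩
  left_inv u := Units.ext rfl
  right_inv f := funext fun i => Units.ext rfl

/-- Matrices over a product ring are the product of the matrix rings. -/
def matrixPiEquiv {ι n : Type*} [Fintype n] (R : ι → Type*) [∀ i, NonUnitalNonAssocSemiring (R i)] :
    Matrix n n (∀ i, R i) ≃+* ∀ i, Matrix n n (R i) where
  toFun M i := Matrix.of fun a b => M a b i
  invFun N := Matrix.of fun a b i => N i a b
  left_inv M := rfl
  right_inv N := rfl
  map_add' M N := rfl
  map_mul' M N := by
    funext i a b
    simp [Matrix.mul_apply, Finset.sum_apply]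

/-- Units of a monoid biject with the subtype of unit elements. -/
noncomputable def unitsEquivIsUnit {M : Type*} [Monoid M] : Mˣ ≃ {x : M // IsUnit x} where
  toFun u := ⟨u.val, u.isUnit⟩
  invFun x := x.2.unit
  left_inv u := Units.ext u.isUnit.unit_spec
  right_inv x := Subtype.ext x.2.unit_spec

lemma card_preimage_addHom {α β : Type*} [AddCommGroup α] [AddCommGroup β]
    (f : α →+ β) (hf : Function.Surjective f) (S : Set β) :
    Nat.card (f ⁻¹' S) = Nat.card f.ker * Nat.card S := by
  let e : α ⧸ f.ker ≃+ β := QuotientAddGroup.quotientKerEquivOfSurjective f hf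
  have h1 : f ⁻¹' S = QuotientAddGroup.mk ⁻¹' (e.toEquiv ⁻¹' S) := by
    ext x
    simp only [Set.mem_preimage]
    exact Iff.of_eq (congrArg (· ∈ S) rfl).symm
  rw [h1, Nat.card_congr (QuotientAddGroup.preimageMkEquivAddSubgroupProdSet _ _),
    Nat.card_prod]
  congr 1
  exact Nat.card_congr (e.toEquiv.subtypeEquiv fun a => Iff.rfl)

lemma isUnit_map_iff' {R S : Type*} [CommRing R] [CommRing S] (f : R →+* S)
    (hf : Function.Surjective f) (hker : ∀ x : R, f x = 0 → IsNilpotent x) (a : R) :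
    IsUnit a ↔ IsUnit (f a) := by
  constructor
  · exact fun h => h.map f
  · rintro ⟨u, hu⟩
    obtain ⟨b, hb⟩ := hf (↑u⁻¹)
    have h0 : f (a * b - 1) = 0 := by
      simp [hb, ← hu, u.mul_inv]
    have hnil : IsNilpotent (1 - a * b) := by
      have := hker _ h0
      simpa using this.neg
    have : IsUnit (a * b) := by
      have := hnil.isUnit_one_sub
      simpa using this
    exact isUnit_of_mul_isUnit_left this

lemma card_ker_mapMatrix {R S : Type*} [CommRing R] [CommRing S] (f : R →+* S) (r : ℕ) :
    Nat.card ((f.mapMatrix (m := Fin r)).toAddMonoidHom.ker) =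
      Nat.card f.toAddMonoidHom.ker ^ (r * r) := by
  have e : ((f.mapMatrix (m := Fin r)).toAddMonoidHom.ker) ≃
      (Fin r → Fin r → f.toAddMonoidHom.ker) := by
    refine ⟨fun M i j => ⟨M.1 i j, ?_⟩, fun g => ⟨Matrix.of fun i j => (g i j).1, ?_⟩, ?_, ?_⟩
    · have := M.2
      simp only [AddMonoidHom.mem_ker] at this ⊢
      have := congrFun (congrFun (congrArg (fun (N : Matrix (Fin r) (Fin r) S) => (N : Fin r → Fin r → S)) this) i) j
      simpa [RingHom.mapMatrix_apply, Matrix.map_apply] using this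
    · simp only [AddMonoidHom.mem_ker]
      ext i j
      have h2 := (g i j).2
      rw [AddMonoidHom.mem_ker] at h2
      simp only [RingHom.toAddMonoidHom_eq_coe, AddMonoidHom.coe_coe] at h2
      simp [RingHom.mapMatrix_apply, Matrix.map_apply, h2]
    · intro M; ext i j; rfl
    · intro g; funext i j; ext; rfl
  rw [Nat.card_congr e, Nat.card_fun, Nat.card_fun, Nat.card_eq_fintype_card (α := Fin r),
    Fintype.card_fin, ← pow_mul]

lemma card_GL_eq_card_detUnit (T : Type*) [CommRing T] (r : ℕ) :
    Nat.card (GL (Fin r) T) = Nat.card {M : Matrix (Fin r) (Fin r) T // IsUnit M.det} :=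
  Nat.card_congr (unitsEquivIsUnit.trans
    (Equiv.subtypeEquivRight fun M => Matrix.isUnit_iff_isUnit_det M))

lemma card_GL_count {R S : Type*} [CommRing R] [CommRing S] [Finite R] [Finite S]
    (f : R →+* S) (hf : Function.Surjective f) (hker : ∀ x : R, f x = 0 → IsNilpotent x)
    (r : ℕ) :
    Nat.card (GL (Fin r) R) =
      Nat.card f.toAddMonoidHom.ker ^ (r * r) * Nat.card (GL (Fin r) S) := by
  rw [card_GL_eq_card_detUnit R r, card_GL_eq_card_detUnit S r]
  have hΦ : Function.Surjective (f.mapMatrix (m := Fin r)) := by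
    intro N
    refine ⟨Matrix.of fun i j => (hf (N i j)).choose, ?_⟩
    ext i j
    exact (hf (N i j)).choose_spec
  have hset : {M : Matrix (Fin r) (Fin r) R | IsUnit M.det} =
      (f.mapMatrix (m := Fin r)).toAddMonoidHom ⁻¹' {N | IsUnit N.det} := by
    ext M
    simp only [Set.mem_setOf_eq, Set.mem_preimage, RingHom.toAddMonoidHom_eq_coe,
      AddMonoidHom.coe_coe]
    rw [show ((f.mapMatrix M : Matrix (Fin r) (Fin r) S)).det = f M.det from (f.map_det M).symm]
    exact isUnit_map_iff' f hf hker M.det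
  calc Nat.card {M : Matrix (Fin r) (Fin r) R // IsUnit M.det}
      = Nat.card ((f.mapMatrix (m := Fin r)).toAddMonoidHom ⁻¹'
          {N : Matrix (Fin r) (Fin r) S | IsUnit N.det}) := by rw [← hset]; rfl
    _ = Nat.card ((f.mapMatrix (m := Fin r)).toAddMonoidHom.ker) *
          Nat.card {N : Matrix (Fin r) (Fin r) S | IsUnit N.det} :=
        card_preimage_addHom _ hΦ _
    _ = _ := by rw [card_ker_mapMatrix f r]; rfl

lemma card_eq_card_ker_mul {R S : Type*} [AddCommGroup R] [AddCommGroup S]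
    (f : R →+ S) (hf : Function.Surjective f) :
    Nat.card R = Nat.card f.ker * Nat.card S := by
  have := card_preimage_addHom f hf Set.univ
  simpa [Nat.card_congr (Equiv.Set.univ _)] using this

lemma prod_GL_field_real (q r : ℕ) (hq : 1 ≤ q) :
    ((∏ i : Fin r, (q ^ r - q ^ (i : ℕ)) : ℕ) : ℝ) =
      (q : ℝ) ^ (r ^ 2) * ∏ i ∈ Finset.Icc 1 r, (1 - ((q : ℝ) ^ i)⁻¹) := by
  have hq0 : (0:ℝ) < (q:ℝ) := by exact_mod_cast hq
  have hfac : ∀ i : Fin r, ((q ^ r - q ^ (i:ℕ) : ℕ) : ℝ) =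
      (q:ℝ) ^ r * (1 - ((q:ℝ) ^ (r - (i:ℕ)))⁻¹) := by
    intro i
    have hle : q ^ (i:ℕ) ≤ q ^ r := Nat.pow_le_pow_right hq (le_of_lt i.isLt)
    have hne : ((q:ℝ)) ^ (r - (i:ℕ)) ≠ 0 := by positivity
    have hpow : ((q:ℝ)) ^ ((i:ℕ)) * ((q:ℝ) ^ (r - (i:ℕ))) = (q:ℝ) ^ r := by
      rw [← pow_add]; congr 1; omega
    rw [Nat.cast_sub hle, mul_one_sub]
    push_cast
    congr 1
    rw [← hpow, mul_assoc, mul_inv_cancel₀ hne, mul_one]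
  rw [Nat.cast_prod]
  rw [Finset.prod_congr rfl fun i _ => hfac i, Finset.prod_mul_distrib, Finset.prod_const,
    Finset.card_univ, Fintype.card_fin, ← pow_mul, ← pow_two]
  congr 1
  rw [Fin.prod_univ_eq_prod_range (fun i => 1 - ((q:ℝ) ^ (r - i))⁻¹) r]
  refine Finset.prod_bij' (fun i _ => r - i) (fun j _ => r - j) ?_ ?_ ?_ ?_ ?_
  · intro a ha
    simp only [Finset.mem_range] at ha
    simp only [Finset.mem_Icc]
    omega
  · intro a ha
    simp only [Finset.mem_Icc] at ha
    simp only [Finset.mem_range]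
    omega
  · intro a ha; simp only [Finset.mem_range] at ha; show r - (r - a) = a; omega
  · intro a ha; simp only [Finset.mem_Icc] at ha; show r - (r - a) = a; omega
  · intro a ha; rfl

lemma card_GL_local {R k : Type*} [CommRing R] [Field k] [Finite R] [Finite k]
    (f : R →+* k) (hf : Function.Surjective f)
    (hker : ∀ x : R, f x = 0 → IsNilpotent x) (r : ℕ) :
    (Nat.card (GL (Fin r) R) : ℝ) =
      (Nat.card R : ℝ) ^ (r ^ 2) * ∏ i ∈ Finset.Icc 1 r, (1 - ((Nat.card k : ℝ) ^ i)⁻¹) := by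
  classical
  letI : Fintype k := Fintype.ofFinite k
  set q : ℕ := Nat.card k with hqdef
  have hq : 1 ≤ q := Nat.one_le_iff_ne_zero.mpr (Nat.card_ne_zero.mpr ⟨⟨0⟩, inferInstance⟩)
  set c : ℕ := Nat.card f.toAddMonoidHom.ker with hcdef
  have hcardR : Nat.card R = c * q :=
    card_eq_card_ker_mul f.toAddMonoidHom (by exact hf)
  have hGLk : Nat.card (GL (Fin r) k) = ∏ i : Fin r, (q ^ r - q ^ (i : ℕ)) := by
    have := Matrix.card_GL_field (𝔽 := k) (n := r)
    rw [this, hqdef, Nat.card_eq_fintype_card]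
  rw [card_GL_count f hf hker r, hGLk]
  rw [Nat.cast_mul, Nat.cast_pow, prod_GL_field_real q r hq, hcardR]
  push_cast
  rw [mul_pow, ← pow_two]
  ring

/-- **Lemma (order of `GL_r(A ⧸ 𝔞)`).**
Let `A` be a Dedekind domain, not a field, all of whose proper quotients are finite, let
`𝔞 ⊆ A` be a nonzero ideal and `r ≥ 1`. Then `GL_r(A ⧸ 𝔞)` is finite, of cardinality
`|𝔞|^(r²) · ∏_{𝔭 ∣ 𝔞} ∏_{i=1}^{r} (1 - |𝔭|^{-i})`. -/
theorem card_GL_quotient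
    (A : Type*) [CommRing A] [IsDomain A] [IsDedekindDomain A] (hA : ¬IsField A)
    (hAfin : ∀ 𝔟 : Ideal A, 𝔟 ≠ ⊥ → Finite (A ⧸ 𝔟))
    (𝔞 : Ideal A) (h𝔞 : 𝔞 ≠ ⊥) (r : ℕ) (hr : 1 ≤ r) :
    Finite (GL (Fin r) (A ⧸ 𝔞)) ∧
    (Nat.card (GL (Fin r) (A ⧸ 𝔞)) : ℝ) =
      (idealNorm 𝔞 : ℝ) ^ (r ^ 2) *
        ∏ᶠ 𝔭 ∈ primesDvd 𝔞, ∏ i ∈ Finset.Icc 1 r, (1 - ((idealNorm 𝔭 : ℝ) ^ i)⁻¹) := by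
  classical
  haveI : Finite (A ⧸ 𝔞) := hAfin 𝔞 h𝔞
  haveI finGL : Finite (GL (Fin r) (A ⧸ 𝔞)) :=
    show Finite (Matrix (Fin r) (Fin r) (A ⧸ 𝔞))ˣ from inferInstance
  refine ⟨finGL, ?_⟩
  have h𝔞0 : 𝔞 ≠ 0 := by rwa [Ideal.zero_eq_bot]
  set s := (UniqueFactorizationMonoid.factors 𝔞).toFinset with hs
  -- identify primesDvd with the finset of prime factors
  have hprimes : primesDvd 𝔞 = ↑s := by
    ext 𝔭
    simp only [primesDvd, Set.mem_setOf_eq, hs, Finset.mem_coe, Multiset.mem_toFinset]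
    constructor
    · rintro ⟨h1, h2, h3⟩
      have hp : Prime 𝔭 := Ideal.prime_of_isPrime h2 h1
      obtain ⟨q, hq, hassoc⟩ :=
        UniqueFactorizationMonoid.exists_mem_factors_of_dvd h𝔞0 hp.irreducible h3
      rwa [associated_iff_eq.mp hassoc]
    · intro h
      have hp : Prime 𝔭 := UniqueFactorizationMonoid.prime_of_factor _ h
      refine ⟨Ideal.isPrime_of_prime hp, by simpa [Ideal.zero_eq_bot] using hp.ne_zero,
        UniqueFactorizationMonoid.dvd_of_mem_factors h⟩
  -- the CRT decomposition
  let E : Ideal A → Ideal A := fun P => P ^ (UniqueFactorizationMonoid.factors 𝔞).count P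
  have e : A ⧸ 𝔞 ≃+* ∀ P : s, A ⧸ E (P : Ideal A) :=
    IsDedekindDomain.quotientEquivPiFactors h𝔞
  -- per-factor facts
  have hPfact : ∀ P : Ideal A, P ∈ s → Prime P := fun P hP =>
    UniqueFactorizationMonoid.prime_of_factor _ (Multiset.mem_toFinset.mp hP)
  have hPbot : ∀ P : Ideal A, P ∈ s → P ≠ ⊥ := fun P hP => by
    simpa [Ideal.zero_eq_bot] using (hPfact P hP).ne_zero
  have hEbot : ∀ P : Ideal A, P ∈ s → E P ≠ ⊥ := fun P hP => by
    have := pow_ne_zero ((UniqueFactorizationMonoid.factors 𝔞).count P)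
      (show P ≠ 0 by simpa [Ideal.zero_eq_bot] using hPbot P hP)
    simpa [Ideal.zero_eq_bot, E] using this
  haveI hfinE : ∀ P : s, Finite (A ⧸ E (P : Ideal A)) := fun P => hAfin _ (hEbot P P.2)
  haveI hfinP : ∀ P : s, Finite (A ⧸ (P : Ideal A)) := fun P => hAfin _ (hPbot P P.2)
  haveI hfieldP : ∀ P : s, Field (A ⧸ (P : Ideal A)) := fun P =>
    haveI : Ideal.IsMaximal (P : Ideal A) :=
      Ideal.IsPrime.isMaximal (Ideal.isPrime_of_prime (hPfact P P.2)) (hPbot P P.2)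
    Ideal.Quotient.field _
  -- cardinality of GL decomposes
  have hGLcard : Nat.card (GL (Fin r) (A ⧸ 𝔞)) =
      ∏ P ∈ s, Nat.card (GL (Fin r) (A ⧸ E P)) := by
    have equiv1 : GL (Fin r) (A ⧸ 𝔞) ≃ ∀ P : s, GL (Fin r) (A ⧸ E (P : Ideal A)) :=
      ((Units.mapEquiv (RingEquiv.mapMatrix e).toMulEquiv).toEquiv.trans
        (Units.mapEquiv (matrixPiEquiv fun P : s => A ⧸ E (P : Ideal A)).toMulEquiv).toEquiv).trans
        (piUnitsEquiv _)
    rw [Nat.card_congr equiv1, Nat.card_pi, Finset.prod_coe_sort s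
      (fun P => Nat.card (GL (Fin r) (A ⧸ E P)))]
  -- cardinality of the quotient decomposes
  have hNormcard : (idealNorm 𝔞 : ℕ) = ∏ P ∈ s, Nat.card (A ⧸ E P) := by
    rw [show idealNorm 𝔞 = Nat.card (A ⧸ 𝔞) from rfl, Nat.card_congr e.toEquiv, Nat.card_pi,
      Finset.prod_coe_sort s (fun P => Nat.card (A ⧸ E P))]
  -- local formula for each prime power
  have hlocal : ∀ P : Ideal A, P ∈ s → (Nat.card (GL (Fin r) (A ⧸ E P)) : ℝ) =
      (Nat.card (A ⧸ E P) : ℝ) ^ (r ^ 2) *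
        ∏ i ∈ Finset.Icc 1 r, (1 - ((Nat.card (A ⧸ P) : ℝ) ^ i)⁻¹) := by
    intro P hP
    haveI : Ideal.IsMaximal P :=
      Ideal.IsPrime.isMaximal (Ideal.isPrime_of_prime (hPfact P hP)) (hPbot P hP)
    letI : Field (A ⧸ P) := Ideal.Quotient.field P
    haveI : Finite (A ⧸ E P) := hAfin _ (hEbot P hP)
    haveI : Finite (A ⧸ P) := hAfin _ (hPbot P hP)
    have hn0 : (UniqueFactorizationMonoid.factors 𝔞).count P ≠ 0 := by
      simpa using Multiset.count_pos.mpr (Multiset.mem_toFinset.mp hP) |>.ne'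
    have hle : E P ≤ P := Ideal.pow_le_self hn0
    refine card_GL_local (k := A ⧸ P) (Ideal.Quotient.factor hle) ?_ ?_ r
    · intro y
      obtain ⟨x, rfl⟩ := Ideal.Quotient.mk_surjective y
      exact ⟨Ideal.Quotient.mk _ x, Ideal.Quotient.factor_mk _ _⟩
    · intro x hx
      obtain ⟨a, rfl⟩ := Ideal.Quotient.mk_surjective x
      rw [Ideal.Quotient.factor_mk, Ideal.Quotient.eq_zero_iff_mem] at hx
      refine ⟨(UniqueFactorizationMonoid.factors 𝔞).count P, ?_⟩
      rw [← map_pow, Ideal.Quotient.eq_zero_iff_mem]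
      exact Ideal.pow_mem_pow hx _
  -- put everything together
  rw [hprimes, finprod_mem_coe_finset]
  rw [hGLcard, Nat.cast_prod, Finset.prod_congr rfl hlocal, Finset.prod_mul_distrib,
    Finset.prod_pow, ← Nat.cast_prod, ← hNormcard]
  simp only [idealNorm]
end

section
/- Let K be a field with algebraic closure K̄, let r ≥ 1, and for each i = 1,…,r let K ⊆ K_i ⊆ L_i ⊆ K̄ be intermediate fields with [L_i:K] finite. Then (∏_{i=1}^r [K_i:K]) / [K_1⋯K_r : K] ≤ (∏_{i=1}^r [L_i:K]) / [L_1⋯L_r : K], where K_1⋯K_r and L_1⋯L_r denote the composita (joins) of the respective fields inside K̄. -/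
open IntermediateField Module Cardinal

private lemma findim_of_le' {K Kbar : Type*} [Field K] [Field Kbar] [Algebra K Kbar]
    {E L : IntermediateField K Kbar} (h : E ≤ L) [FiniteDimensional K L] :
    FiniteDimensional K E :=
  FiniteDimensional.of_injective (IntermediateField.inclusion h).toLinearMap
    (IntermediateField.inclusion h).toRingHom.injective

set_option synthInstance.maxHeartbeats 1000000 in
set_option maxHeartbeats 2000000 in
private lemma key_relfinrank' {K Kbar : Type*} [Field K] [Field Kbar] [Algebra K Kbar]
    (E L M : IntermediateField K Kbar) (hEL : E ≤ L) [FiniteDimensional K L]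
    [FiniteDimensional K M] :
    relfinrank (E ⊔ M) (L ⊔ M) ≤ relfinrank E L := by
  haveI : FiniteDimensional K E := findim_of_le' hEL
  have h' : E ⊔ M ≤ L ⊔ M := sup_le_sup_right hEL M
  have hlt : relrank E L < ℵ₀ := by
    obtain ⟨c, hc⟩ := IntermediateField.relrank_dvd_rank_bot E L
    rcases eq_or_ne c 0 with rfl | hc0
    · rw [mul_zero] at hc
      exact absurd hc (by simpa using (rank_pos (R := K) (M := ↥L)).ne')
    · calc relrank E L ≤ relrank E L * c := Cardinal.le_mul_right hc0
        _ = Module.rank K L := hc.symm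
        _ < ℵ₀ := Module.rank_lt_aleph0 K L
  have hrank : relrank (E ⊔ M) (L ⊔ M) ≤ relrank E L := by
    rw [relrank_eq_rank_of_le h', relrank_eq_rank_of_le hEL]
    have hadj : extendScalars h' = adjoin ↥(E ⊔ M) (L : Set Kbar) := by
      apply restrictScalars_injective K
      rw [extendScalars_restrictScalars, restrictScalars_adjoin_eq_sup, adjoin_self,
        sup_assoc, sup_comm M L, ← sup_assoc, sup_eq_right.mpr hEL]
    rw [hadj]
    letI : Algebra ↥E ↥(E ⊔ M) := (inclusion (le_sup_left : E ≤ E ⊔ M)).toAlgebra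
    haveI : IsScalarTower ↥E ↥(E ⊔ M) Kbar := IsScalarTower.of_algebraMap_eq' rfl
    haveI : IsScalarTower K ↥E ↥(E ⊔ M) := IsScalarTower.of_algebraMap_eq' rfl
    haveI : FiniteDimensional ↥E ↥(E ⊔ M) := FiniteDimensional.right K ↥E ↥(E ⊔ M)
    have := adjoin_rank_le_of_isAlgebraic (F := ↥E) (K := Kbar) ↥(E ⊔ M)
      (extendScalars hEL) (Or.inl (Algebra.IsAlgebraic.of_finite ↥E ↥(E ⊔ M)))
    rwa [coe_extendScalars] at this
  rw [relfinrank_eq_toNat_relrank, relfinrank_eq_toNat_relrank]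
  exact Cardinal.toNat_le_toNat hrank hlt

private lemma keyA' {K Kbar : Type*} [Field K] [Field Kbar] [Algebra K Kbar]
    (E L M : IntermediateField K Kbar) (hEL : E ≤ L) [FiniteDimensional K L]
    [FiniteDimensional K M] :
    finrank K E * finrank K ↥(L ⊔ M) ≤ finrank K L * finrank K ↥(E ⊔ M) := by
  haveI : FiniteDimensional K E := findim_of_le' hEL
  have h' : E ⊔ M ≤ L ⊔ M := sup_le_sup_right hEL M
  have h1 := IntermediateField.finrank_bot_mul_relfinrank hEL
  have h2 := IntermediateField.finrank_bot_mul_relfinrank h'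
  have key := key_relfinrank' E L M hEL
  calc finrank K E * finrank K ↥(L ⊔ M)
      = finrank K E * (finrank K ↥(E ⊔ M) * relfinrank (E ⊔ M) (L ⊔ M)) := by rw [h2]
    _ ≤ finrank K E * (finrank K ↥(E ⊔ M) * relfinrank E L) :=
        Nat.mul_le_mul_left _ (Nat.mul_le_mul_left _ key)
    _ = (finrank K E * relfinrank E L) * finrank K ↥(E ⊔ M) := by ring
    _ = finrank K L * finrank K ↥(E ⊔ M) := by rw [h1]

private lemma iSup_eq_sup_compl' {K Kbar : Type*} [Field K] [Field Kbar] [Algebra K Kbar]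
    {r : ℕ} (f : Fin r → IntermediateField K Kbar) (a : Fin r) :
    (⨆ i, f i) = f a ⊔ ⨆ i : {i : Fin r // i ≠ a}, f i := by
  refine le_antisymm (iSup_le fun i => ?_) (sup_le (le_iSup f a) (iSup_le fun j => le_iSup f j))
  by_cases h : i = a
  · exact h ▸ le_sup_left
  · exact le_sup_of_le_right (le_iSup (fun j : {i : Fin r // i ≠ a} => f j) ⟨i, h⟩)

private lemma chain' {K Kbar : Type*} [Field K] [Field Kbar] [Algebra K Kbar]
    {r : ℕ} (Ki Li : Fin r → IntermediateField K Kbar)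
    (hKL : ∀ i, Ki i ≤ Li i) [∀ i, FiniteDimensional K (Li i)] (s : Finset (Fin r)) :
    (∏ i, finrank K (Ki i)) * finrank K ↥(⨆ i, if i ∈ s then Li i else Ki i)
      ≤ (∏ i, finrank K ↥(if i ∈ s then Li i else Ki i)) * finrank K ↥(⨆ i, Ki i) := by
  haveI : ∀ i, FiniteDimensional K (Ki i) := fun i => findim_of_le' (hKL i)
  haveI instG : ∀ (t : Finset (Fin r)) (i : Fin r),
      FiniteDimensional K ↥(if i ∈ t then Li i else Ki i) := fun t i => by
    by_cases h : i ∈ t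
    · rw [if_pos h]; infer_instance
    · rw [if_neg h]; infer_instance
  induction s using Finset.induction_on with
  | empty => simp; exact le_rfl
  | @insert a s ha ih =>
    have hoff : ∀ i : Fin r, i ≠ a →
        (if i ∈ insert a s then Li i else Ki i) = (if i ∈ s then Li i else Ki i) := by
      intro i hi; simp [Finset.mem_insert, hi]
    have hsup1 : (⨆ i, if i ∈ s then Li i else Ki i)
        = Ki a ⊔ ⨆ i : {i : Fin r // i ≠ a}, (if (i : Fin r) ∈ s then Li i else Ki i) := by
      rw [iSup_eq_sup_compl', if_neg ha]
    have hsup2 : (⨆ i, if i ∈ insert a s then Li i else Ki i)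
        = Li a ⊔ ⨆ i : {i : Fin r // i ≠ a}, (if (i : Fin r) ∈ s then Li i else Ki i) := by
      rw [iSup_eq_sup_compl', if_pos (Finset.mem_insert_self a s)]
      congr 1
      exact iSup_congr fun j => hoff j j.2
    have hprodG : (∏ i, finrank K ↥(if i ∈ s then Li i else Ki i))
        = finrank K (Ki a)
          * ∏ i ∈ Finset.univ.erase a, finrank K ↥(if i ∈ s then Li i else Ki i) := by
      rw [← Finset.mul_prod_erase Finset.univ _ (Finset.mem_univ a), if_neg ha]
    have hprodG' : (∏ i, finrank K ↥(if i ∈ insert a s then Li i else Ki i))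
        = finrank K (Li a)
          * ∏ i ∈ Finset.univ.erase a, finrank K ↥(if i ∈ s then Li i else Ki i) := by
      rw [← Finset.mul_prod_erase Finset.univ _ (Finset.mem_univ a),
        if_pos (Finset.mem_insert_self a s)]
      congr 1
      exact Finset.prod_congr rfl fun i hi => by rw [hoff i (Finset.mem_erase.mp hi).1]
    haveI : FiniteDimensional K
        ↥(⨆ i : {i : Fin r // i ≠ a}, (if (i : Fin r) ∈ s then Li i else Ki i)) :=
      IntermediateField.finiteDimensional_iSup_of_finite
    have hstep : finrank K (Ki a) * finrank K ↥(⨆ i, if i ∈ insert a s then Li i else Ki i)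
        ≤ finrank K (Li a) * finrank K ↥(⨆ i, if i ∈ s then Li i else Ki i) := by
      rw [hsup1, hsup2]
      exact keyA' (Ki a) (Li a) _ (hKL a)
    haveI : FiniteDimensional K ↥(⨆ i, if i ∈ s then Li i else Ki i) :=
      IntermediateField.finiteDimensional_iSup_of_finite
    have hpos : 0 < finrank K (Ki a) * finrank K ↥(⨆ i, if i ∈ s then Li i else Ki i) :=
      Nat.mul_pos finrank_pos finrank_pos
    refine Nat.le_of_mul_le_mul_left ?_ hpos
    calc (finrank K (Ki a) * finrank K ↥(⨆ i, if i ∈ s then Li i else Ki i))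
          * ((∏ i, finrank K (Ki i)) * finrank K ↥(⨆ i, if i ∈ insert a s then Li i else Ki i))
        = ((∏ i, finrank K (Ki i)) * finrank K ↥(⨆ i, if i ∈ s then Li i else Ki i))
            * (finrank K (Ki a)
              * finrank K ↥(⨆ i, if i ∈ insert a s then Li i else Ki i)) := by ring
      _ ≤ ((∏ i, finrank K ↥(if i ∈ s then Li i else Ki i)) * finrank K ↥(⨆ i, Ki i))
            * (finrank K (Li a)
              * finrank K ↥(⨆ i, if i ∈ s then Li i else Ki i)) := Nat.mul_le_mul ih hstep
      _ = (finrank K (Ki a) * finrank K ↥(⨆ i, if i ∈ s then Li i else Ki i))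
            * ((∏ i, finrank K ↥(if i ∈ insert a s then Li i else Ki i))
              * finrank K ↥(⨆ i, Ki i)) := by
          rw [hprodG, hprodG']; ring

set_option synthInstance.maxHeartbeats 1000000 in
set_option maxHeartbeats 2000000 in
/-- **Lemma (composita of field extensions).**
Let `K` be a field with algebraic closure `K̄`, and for `i = 1, …, r` (with `r ≥ 1`) let
`K ⊆ Kᵢ ⊆ Lᵢ ⊆ K̄` be intermediate fields with `Lᵢ/K` finite. Then
`(∏ᵢ [Kᵢ:K]) / [K₁⋯K_r : K] ≤ (∏ᵢ [Lᵢ:K]) / [L₁⋯L_r : K]`. -/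
theorem composita_degree_ratio_le
    (K Kbar : Type*) [Field K] [Field Kbar] [Algebra K Kbar] [IsAlgClosure K Kbar]
    (r : ℕ) (hr : 1 ≤ r)
    (Ki Li : Fin r → IntermediateField K Kbar)
    (hKL : ∀ i, Ki i ≤ Li i)
    (hfin : ∀ i, FiniteDimensional K (Li i)) :
    (∏ i, (Module.finrank K (Ki i) : ℝ)) / (Module.finrank K ↥(⨆ i, Ki i) : ℝ)
      ≤ (∏ i, (Module.finrank K (Li i) : ℝ)) / (Module.finrank K ↥(⨆ i, Li i) : ℝ) := by
  haveI := hfin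
  haveI : ∀ i, FiniteDimensional K (Ki i) := fun i => findim_of_le' (hKL i)
  haveI : FiniteDimensional K ↥(⨆ i, Ki i) :=
    IntermediateField.finiteDimensional_iSup_of_finite
  haveI : FiniteDimensional K ↥(⨆ i, Li i) :=
    IntermediateField.finiteDimensional_iSup_of_finite
  have h := chain' Ki Li hKL Finset.univ
  have e1 : (⨆ i, if i ∈ (Finset.univ : Finset (Fin r)) then Li i else Ki i) = ⨆ i, Li i :=
    iSup_congr fun i => if_pos (Finset.mem_univ i)
  have e2 : (∏ i, finrank K ↥(if i ∈ (Finset.univ : Finset (Fin r)) then Li i else Ki i))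
      = ∏ i, finrank K (Li i) :=
    Finset.prod_congr rfl fun i _ => by rw [if_pos (Finset.mem_univ i)]
  rw [e1, e2] at h
  rw [div_le_div_iff₀ (by exact_mod_cast (finrank_pos : 0 < finrank K ↥(⨆ i, Ki i)))
    (by exact_mod_cast (finrank_pos : 0 < finrank K ↥(⨆ i, Li i)))]
  exact_mod_cast h
end

section
/- Let A be a Dedekind domain which is not a field such that A/𝔞 is finite for every nonzero ideal 𝔞 ⊆ A, let 𝔞 ⊆ A be a nonzero ideal, let r ≥ 1, and let x ∈ (A/𝔞)^r be an element whose annihilator in A equals 𝔞 (equivalently, whose annihilator in A/𝔞 is zero). Then the orbit of x under the natural action of GL_r(A/𝔞) on (A/𝔞)^r has cardinality |𝔞|^r·∏_{𝔭 | 𝔞}(1 - |𝔭|^{-r}), the product being over the nonzero prime ideals 𝔭 dividing 𝔞; equivalently, the stabilizer of x in GL_r(A/𝔞) has index |𝔞|^r·∏_{𝔭 | 𝔞}(1 - |𝔭|^{-r}). -/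
open Matrix

section Aux
variable {R : Type*} [CommRing R] {r : ℕ}

/-- faithful vector: zero annihilator in `R`. -/
def MFaithful (y : Fin r → R) : Prop := ∀ c : R, (∀ k, c * y k = 0) → c = 0

/-- orbit relation under `GL r R`. -/
def InOrbit (x y : Fin r → R) : Prop :=
  ∃ g : GL (Fin r) R, Matrix.mulVec (g : Matrix (Fin r) (Fin r) R) x = y

theorem GL_inv_mul_coe (g : GL (Fin r) R) :
    ((g⁻¹ : GL (Fin r) R) : Matrix (Fin r) (Fin r) R) * (g : Matrix (Fin r) (Fin r) R) = 1 := by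
  have := congrArg (Units.val) (inv_mul_cancel g)
  simpa using this

theorem inOrbit_refl (x : Fin r → R) : InOrbit x x :=
  ⟨1, by simp⟩

theorem InOrbit.symm {x y : Fin r → R} (h : InOrbit x y) : InOrbit y x := by
  obtain ⟨g, hg⟩ := h
  refine ⟨g⁻¹, ?_⟩
  rw [← hg, Matrix.mulVec_mulVec, GL_inv_mul_coe, Matrix.one_mulVec]

theorem InOrbit.trans {x y z : Fin r → R} (h : InOrbit x y) (h' : InOrbit y z) :
    InOrbit x z := by
  obtain ⟨g, hg⟩ := h; obtain ⟨g', hg'⟩ := h'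
  exact ⟨g' * g, by rw [Units.val_mul, ← Matrix.mulVec_mulVec, hg, hg']⟩

theorem MFaithful.of_inOrbit {x y : Fin r → R} (hx : MFaithful x) (h : InOrbit x y) :
    MFaithful y := by
  obtain ⟨g, hg⟩ := h
  intro c hc
  refine hx c fun k => ?_
  have h0 : c • y = 0 := funext fun k => by simpa [Pi.smul_apply, smul_eq_mul] using hc k
  have h1 : c • ((g : Matrix (Fin r) (Fin r) R).mulVec x) = 0 := by rw [hg, h0]
  rw [← Matrix.mulVec_smul] at h1
  have h2 := congrArg (fun v => ((g⁻¹ : GL (Fin r) R) : Matrix (Fin r) (Fin r) R).mulVec v) h1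
  simp only [Matrix.mulVec_mulVec, Matrix.mulVec_zero] at h2
  rw [GL_inv_mul_coe, Matrix.one_mulVec] at h2
  simpa [smul_eq_mul] using congrFun h2 k

theorem inOrbit_single_of_isUnit {j : Fin r} {y : Fin r → R} (h : IsUnit (y j)) :
    InOrbit (Pi.single j 1) y := by
  have hdet : ((1 : Matrix (Fin r) (Fin r) R).updateCol j y).det = y j := by
    rw [← Matrix.cramer_apply, Matrix.cramer_one]; rfl
  have hM : IsUnit ((1 : Matrix (Fin r) (Fin r) R).updateCol j y) := by
    rw [Matrix.isUnit_iff_isUnit_det, hdet]; exact h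
  refine ⟨hM.unit, ?_⟩
  have hc : (hM.unit : Matrix (Fin r) (Fin r) R) = (1 : Matrix (Fin r) (Fin r) R).updateCol j y :=
    rfl
  rw [hc, Matrix.mulVec_single_one]
  funext k
  simp [Matrix.updateCol_apply]

theorem inOrbit_single_single (j j' : Fin r) :
    InOrbit (Pi.single j (1 : R)) (Pi.single j' 1) := by
  classical
  set σ : Equiv.Perm (Fin r) := Equiv.swap j' j with hσ
  have hdet : IsUnit (σ.permMatrix R).det := by
    rw [Matrix.det_permutation]
    rcases Int.units_eq_one_or (Equiv.Perm.sign σ) with h | h <;> rw [h] <;> simp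
  have hM : IsUnit (σ.permMatrix R) := by rw [Matrix.isUnit_iff_isUnit_det]; exact hdet
  refine ⟨hM.unit, ?_⟩
  have hc : (hM.unit : Matrix (Fin r) (Fin r) R) = σ.permMatrix R := rfl
  rw [hc, Matrix.mulVec_single_one]
  funext k
  have hentry : σ.permMatrix R k j = if σ k = j then (1 : R) else 0 := by
    simp [Equiv.Perm.permMatrix, Equiv.toPEquiv_apply, PEquiv.toMatrix_apply]
  rw [Matrix.col_apply, hentry]
  by_cases hk : k = j'
  · subst hk
    simp [σ]
  · have : σ k ≠ j := fun hkj => hk (by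
      have := σ.injective (a₁ := k) (a₂ := j') (by rw [hkj, hσ]; simp)
      exact this)
    simp [this, Pi.single_apply, hk]
end Aux

section Local
variable {A : Type*} [CommRing A] [IsDomain A] [IsDedekindDomain A]
variable {p : Ideal A} {e : ℕ}

theorem local_isUnit_of_factor_ne_zero (hp : p.IsPrime) (hp0 : p ≠ ⊥) (he : 1 ≤ e)
    (z : A ⧸ p ^ e) (hz : Ideal.Quotient.factor (Ideal.pow_le_self (by omega) : p ^ e ≤ p) z ≠ 0) :
    IsUnit z := by
  obtain ⟨a, rfl⟩ := Ideal.Quotient.mk_surjective z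
  rw [Ideal.Quotient.factor_mk] at hz
  have ha : a ∉ p := fun h => hz (Ideal.Quotient.eq_zero_iff_mem.mpr h)
  have hmax : p.IsMaximal := Ideal.IsPrime.isMaximal hp hp0
  obtain ⟨u, t, ht, h1⟩ := hmax.exists_inv ha
  have hnil : IsNilpotent (Ideal.Quotient.mk (p ^ e) t) := by
    refine ⟨e, ?_⟩
    rw [← map_pow]
    exact Ideal.Quotient.eq_zero_iff_mem.mpr (Ideal.pow_mem_pow ht e)
  have h2 : Ideal.Quotient.mk (p ^ e) u * Ideal.Quotient.mk (p ^ e) a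
      = 1 - Ideal.Quotient.mk (p ^ e) t := by
    rw [← _root_.map_mul]
    have : u * a = 1 - t := by linear_combination h1
    rw [this, map_sub, _root_.map_one]
  exact isUnit_of_mul_isUnit_right (h2 ▸ hnil.isUnit_one_sub)

theorem local_faithful_iff (hp : p.IsPrime) (hp0 : p ≠ ⊥) (he : 1 ≤ e) {r : ℕ} (y : Fin r → A ⧸ p ^ e) :
    MFaithful y ↔ ∃ j, IsUnit (y j) := by
  constructor
  · intro hf
    by_contra hno
    push_neg at hno
    have hlt : p ^ e < p ^ (e - 1) := by
      have := Ideal.pow_succ_lt_pow (P := p) hp0 (e - 1)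
      rwa [Nat.sub_add_cancel he] at this
    obtain ⟨t, ht, ht'⟩ := SetLike.exists_of_lt hlt
    have hc0 : (Ideal.Quotient.mk (p ^ e) t) ≠ 0 :=
      fun h => ht' (Ideal.Quotient.eq_zero_iff_mem.mp h)
    refine hc0 (hf _ fun k => ?_)
    obtain ⟨a, ha⟩ := Ideal.Quotient.mk_surjective (y k)
    have hap : a ∈ p := by
      by_contra hap
      exact hno k (ha ▸ local_isUnit_of_factor_ne_zero hp hp0 he _
        (by rw [Ideal.Quotient.factor_mk]; exact fun h => hap (Ideal.Quotient.eq_zero_iff_mem.mp h)))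
    rw [← ha, ← _root_.map_mul]
    refine Ideal.Quotient.eq_zero_iff_mem.mpr ?_
    have : t * a ∈ p ^ (e - 1) * p := Ideal.mul_mem_mul ht hap
    rwa [← pow_succ, Nat.sub_add_cancel he] at this
  · rintro ⟨j, hj⟩ c hc
    obtain ⟨u, hu⟩ := hj
    have := hc j
    rw [← hu] at this
    calc c = c * ↑u * ↑u⁻¹ := by rw [mul_assoc, Units.mul_inv, mul_one]
    _ = 0 := by rw [this, zero_mul]

theorem local_factor_ne_zero_iff (hp : p.IsPrime) (hp0 : p ≠ ⊥) (he : 1 ≤ e) {r : ℕ} (y : Fin r → A ⧸ p ^ e) :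
    MFaithful y ↔
      ¬ ∀ k, Ideal.Quotient.factor (Ideal.pow_le_self (by omega) : p ^ e ≤ p) (y k) = 0 := by
  rw [local_faithful_iff hp hp0 he]
  constructor
  · rintro ⟨j, hj⟩ hall
    obtain ⟨u, hu⟩ := hj
    have h1 : Ideal.Quotient.factor (Ideal.pow_le_self (by omega) : p ^ e ≤ p) ((u⁻¹ : Units _) * y j)
        = 0 := by rw [_root_.map_mul, hall j, mul_zero]
    rw [← hu] at h1
    simp only [Units.inv_mul] at h1
    rw [_root_.map_one] at h1
    have : Nontrivial (A ⧸ p) := Ideal.Quotient.nontrivial_iff.mpr hp.ne_top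
    exact one_ne_zero h1
  · intro h
    push_neg at h
    obtain ⟨k, hk⟩ := h
    exact ⟨k, local_isUnit_of_factor_ne_zero hp hp0 he _ hk⟩

end Local

section Count
variable {A : Type*} [CommRing A] [IsDomain A] [IsDedekindDomain A]
variable {p : Ideal A} {e : ℕ}

theorem local_card_eq (he : 1 ≤ e) [Finite (A ⧸ p ^ e)] :
    Nat.card (A ⧸ p ^ e) = Nat.card (A ⧸ p) *
      Nat.card {z : A ⧸ p ^ e //
        Ideal.Quotient.factor (Ideal.pow_le_self (by omega) : p ^ e ≤ p) z = 0} := by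
  set ψ := Ideal.Quotient.factor (Ideal.pow_le_self (by omega) : p ^ e ≤ p) with hψ
  set f := ψ.toAddMonoidHom with hf
  have hsurj : Function.Surjective f := by
    intro w
    obtain ⟨a, rfl⟩ := Ideal.Quotient.mk_surjective w
    exact ⟨Ideal.Quotient.mk (p ^ e) a, Ideal.Quotient.factor_mk (Ideal.pow_le_self (by omega) : p ^ e ≤ p) a⟩
  have h1 := AddSubgroup.card_eq_card_quotient_mul_card_addSubgroup f.ker
  have h2 : Nat.card ((A ⧸ p ^ e) ⧸ f.ker) = Nat.card (A ⧸ p) :=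
    Nat.card_congr (QuotientAddGroup.quotientKerEquivOfSurjective f hsurj).toEquiv
  have h3 : Nat.card f.ker = Nat.card {z : A ⧸ p ^ e // ψ z = 0} :=
    Nat.card_congr (Equiv.subtypeEquivRight (fun z => f.mem_ker))
  rw [h1, h2, h3]

theorem local_card_faithful (hp : p.IsPrime) (hp0 : p ≠ ⊥) (he : 1 ≤ e)
    [Finite (A ⧸ p ^ e)] (r : ℕ) :
    Nat.card {y : Fin r → A ⧸ p ^ e | MFaithful y}
      = Nat.card (A ⧸ p ^ e) ^ r - Nat.card {z : A ⧸ p ^ e //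
          Ideal.Quotient.factor (Ideal.pow_le_self (by omega) : p ^ e ≤ p) z = 0} ^ r := by
  set ψ := Ideal.Quotient.factor (Ideal.pow_le_self (by omega) : p ^ e ≤ p) with hψ
  set N : Set (Fin r → A ⧸ p ^ e) := {y | ∀ k, ψ (y k) = 0} with hN
  have hSN : {y : Fin r → A ⧸ p ^ e | MFaithful y} = Nᶜ := by
    ext y
    simp only [Set.mem_setOf_eq, Set.mem_compl_iff, hN]
    exact local_factor_ne_zero_iff hp hp0 he y
  have hNcard : Nat.card N = Nat.card {z : A ⧸ p ^ e // ψ z = 0} ^ r := by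
    have e1 : N ≃ ∀ _ : Fin r, {z : A ⧸ p ^ e // ψ z = 0} :=
      Equiv.subtypePiEquivPi (p := fun _ z => ψ z = 0)
    rw [Nat.card_congr e1, Nat.card_pi, Finset.prod_const, Finset.card_univ, Fintype.card_fin]
  have htot : Nat.card (Fin r → A ⧸ p ^ e) = Nat.card (A ⧸ p ^ e) ^ r := by
    rw [Nat.card_pi, Finset.prod_const, Finset.card_univ, Fintype.card_fin]
  have hcompl := Set.ncard_add_ncard_compl N (Set.toFinite N)
  rw [hSN, Nat.card_coe_set_eq]
  rw [Nat.card_coe_set_eq] at hNcard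
  omega

end Count

section Transport
variable {R : Type*} [CommRing R] {ι : Type*} [Fintype ι] [DecidableEq ι]
variable {L : ι → Type*} [∀ i, CommRing (L i)] {r : ℕ}

/-- component projection -/
def piComp (φ : R ≃+* ∀ i, L i) (i : ι) : R →+* L i :=
  (Pi.evalRingHom L i).comp (φ : R →+* ∀ i, L i)

theorem piComp_apply (φ : R ≃+* ∀ i, L i) (i : ι) (z : R) : piComp φ i z = φ z i := rfl

theorem piComp_inj (φ : R ≃+* ∀ i, L i) {z w : R}
    (h : ∀ i, piComp φ i z = piComp φ i w) : z = w :=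
  φ.injective (funext h)

theorem piComp_symm (φ : R ≃+* ∀ i, L i) (v : ∀ i, L i) (i : ι) :
    piComp φ i (φ.symm v) = v i := by
  rw [piComp_apply, RingEquiv.apply_symm_apply]

theorem faithful_comp_iff (φ : R ≃+* ∀ i, L i) (y : Fin r → R) :
    MFaithful y ↔ ∀ i, MFaithful (fun k => piComp φ i (y k)) := by
  constructor
  · intro hy i c hc
    have hz : φ.symm (Pi.single i c) = 0 := by
      refine hy _ fun k => ?_
      refine piComp_inj φ fun i' => ?_
      rw [_root_.map_mul, map_zero, piComp_symm]
      by_cases hi : i' = i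
      · subst hi; rw [Pi.single_eq_same]; exact hc k
      · rw [Pi.single_eq_of_ne hi, zero_mul]
    have h0 : Pi.single i c = (0 : ∀ i, L i) := by
      have := congrArg φ hz
      rwa [RingEquiv.apply_symm_apply, map_zero] at this
    have := congrFun h0 i
    rwa [Pi.single_eq_same] at this
  · intro h c hc
    refine piComp_inj φ fun i => ?_
    rw [map_zero]
    refine h i (piComp φ i c) fun k => ?_
    rw [← _root_.map_mul, hc k, map_zero]

theorem inOrbit_of_components (φ : R ≃+* ∀ i, L i) (x y : Fin r → R)
    (h : ∀ i, InOrbit (fun k => piComp φ i (x k)) (fun k => piComp φ i (y k))) :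
    InOrbit x y := by
  choose g hg using h
  set G : Matrix (Fin r) (Fin r) R :=
    fun k l => φ.symm (fun i => (g i : Matrix (Fin r) (Fin r) (L i)) k l) with hG
  set G' : Matrix (Fin r) (Fin r) R :=
    fun k l => φ.symm (fun i => ((g i)⁻¹ : GL (Fin r) (L i)) k l) with hG'
  have hmapG : ∀ i, G.map (piComp φ i) = (g i : Matrix (Fin r) (Fin r) (L i)) := by
    intro i; ext k l; rw [Matrix.map_apply, hG, piComp_symm]
  have hmapG' : ∀ i, G'.map (piComp φ i) = ((g i)⁻¹ : GL (Fin r) (L i)) := by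
    intro i; ext k l; rw [Matrix.map_apply, hG', piComp_symm]
  have hmul : ∀ (M N : Matrix (Fin r) (Fin r) R) (i : ι),
      (M * N).map (piComp φ i) = M.map (piComp φ i) * N.map (piComp φ i) := by
    intro M N i
    ext k l
    simp [Matrix.map_apply, Matrix.mul_apply, map_sum, _root_.map_mul]
  have hone : ∀ i, (1 : Matrix (Fin r) (Fin r) R).map (piComp φ i) = 1 := fun i =>
    Matrix.map_one _ (map_zero _) (map_one _)
  have h1 : G * G' = 1 := by
    ext k l
    refine piComp_inj φ fun i => ?_
    have : ((G * G').map (piComp φ i)) k l = ((1 : Matrix (Fin r) (Fin r) R).map (piComp φ i)) k l := by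
      rw [hmul, hmapG, hmapG', hone]
      have : ((g i) : Matrix (Fin r) (Fin r) (L i)) * ((g i)⁻¹ : GL (Fin r) (L i)) = 1 := by
        have := congrArg Units.val (mul_inv_cancel (g i))
        simpa using this
      rw [this]
    simpa [Matrix.map_apply] using this
  have h2 : G' * G = 1 := by
    ext k l
    refine piComp_inj φ fun i => ?_
    have : ((G' * G).map (piComp φ i)) k l = ((1 : Matrix (Fin r) (Fin r) R).map (piComp φ i)) k l := by
      rw [hmul, hmapG, hmapG', hone]
      rw [GL_inv_mul_coe]
    simpa [Matrix.map_apply] using this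
  refine ⟨⟨G, G', h1, h2⟩, ?_⟩
  funext k
  refine piComp_inj φ fun i => ?_
  have hv := RingHom.map_mulVec (piComp φ i) G x k
  rw [hv, hmapG]
  have : (piComp φ i) ∘ x = fun k => piComp φ i (x k) := rfl
  rw [this, hg i]

/-- decompose vectors componentwise -/
def piVecEquiv (φ : R ≃+* ∀ i, L i) : (Fin r → R) ≃ ∀ i, (Fin r → L i) :=
    { toFun := fun y i k => piComp φ i (y k)
      invFun := fun w k => φ.symm (fun i => w i k)
      left_inv := fun y => by
        funext k
        simp [piComp_apply, RingEquiv.symm_apply_apply]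
      right_inv := fun w => by
        funext i k
        simp [piComp_symm] }

theorem card_faithful_eq_prod (φ : R ≃+* ∀ i, L i) :
    Nat.card {y : Fin r → R | MFaithful y}
      = ∏ i, Nat.card {v : Fin r → L i | MFaithful v} := by
  have E1 : {y : Fin r → R | MFaithful y} ≃
      {w : ∀ i, (Fin r → L i) // ∀ i, MFaithful (w i)} :=
    (Equiv.subtypeEquiv (piVecEquiv φ) (fun y => show MFaithful y ↔ _ from faithful_comp_iff φ y))
  have E2 : {w : ∀ i, (Fin r → L i) // ∀ i, MFaithful (w i)} ≃
      ∀ i, {v : Fin r → L i // MFaithful v} :=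
    Equiv.subtypePiEquivPi
  rw [Nat.card_congr (E1.trans E2), Nat.card_pi]
  rfl

end Transport

section LocalOrbit
variable {A : Type*} [CommRing A] [IsDomain A] [IsDedekindDomain A]
variable {p : Ideal A} {e : ℕ}

theorem local_inOrbit (hp : p.IsPrime) (hp0 : p ≠ ⊥) (he : 1 ≤ e) {r : ℕ}
    {v w : Fin r → A ⧸ p ^ e} (hv : MFaithful v) (hw : MFaithful w) : InOrbit v w := by
  obtain ⟨j, hj⟩ := (local_faithful_iff hp hp0 he v).mp hv
  obtain ⟨j', hj'⟩ := (local_faithful_iff hp hp0 he w).mp hw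
  exact ((inOrbit_single_of_isUnit hj).symm.trans (inOrbit_single_single j j')).trans
    (inOrbit_single_of_isUnit hj')

end LocalOrbit


/-- **Lemma (orbit of a vector of maximal order under `GL_r(A ⧸ 𝔞)`).**
Let `A` be a Dedekind domain, not a field, all of whose proper quotients are finite, let
`𝔞 ⊆ A` be a nonzero ideal, `r ≥ 1`, and let `x ∈ (A ⧸ 𝔞)^r` have annihilator in `A`
exactly `𝔞`. Then the orbit of `x` under `GL_r(A ⧸ 𝔞)` has cardinality
`|𝔞|^r · ∏_{𝔭 ∣ 𝔞} (1 - |𝔭|^{-r})`. -/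
theorem card_GL_orbit
    (A : Type*) [CommRing A] [IsDomain A] [IsDedekindDomain A] (hA : ¬IsField A)
    (hAfin : ∀ 𝔟 : Ideal A, 𝔟 ≠ ⊥ → Finite (A ⧸ 𝔟))
    (𝔞 : Ideal A) (h𝔞 : 𝔞 ≠ ⊥) (r : ℕ) (hr : 1 ≤ r)
    (x : Fin r → A ⧸ 𝔞) (hx : ∀ a : A, a • x = 0 ↔ a ∈ 𝔞) :
    (Nat.card {y : Fin r → A ⧸ 𝔞 |
        ∃ g : GL (Fin r) (A ⧸ 𝔞), Matrix.mulVec (g : Matrix (Fin r) (Fin r) (A ⧸ 𝔞)) x = y} : ℝ)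
      = (idealNorm 𝔞 : ℝ) ^ r * ∏ᶠ 𝔭 ∈ primesDvd 𝔞, (1 - ((idealNorm 𝔭 : ℝ) ^ r)⁻¹) := by
  classical
  have h𝔞0 : 𝔞 ≠ 0 := h𝔞
  set s : Finset (Ideal A) := (UniqueFactorizationMonoid.factors 𝔞).toFinset with hs
  set ee : Ideal A → ℕ := fun p => (UniqueFactorizationMonoid.factors 𝔞).count p with hee
  have hprime : ∀ p ∈ s, Prime p := fun p hp =>
    UniqueFactorizationMonoid.prime_of_factor p (Multiset.mem_toFinset.mp hp)
  have hprod : ∏ p ∈ s, p ^ ee p = 𝔞 := by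
    calc ∏ p ∈ s, p ^ ee p
        = ((UniqueFactorizationMonoid.factors 𝔞).map id).prod :=
          (Finset.prod_multiset_map_count _ id).symm
      _ = (UniqueFactorizationMonoid.factors 𝔞).prod := by rw [Multiset.map_id]
      _ = 𝔞 := associated_iff_eq.mp (UniqueFactorizationMonoid.factors_prod h𝔞0)
  set L : s → Type _ := fun i => A ⧸ ((i : Ideal A) ^ ee (i : Ideal A)) with hL
  have φ : (A ⧸ 𝔞) ≃+* ∀ i : s, L i :=
    IsDedekindDomain.quotientEquivPiOfFinsetProdEq 𝔞 (fun p => p) ee hprime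
      (fun i _ j _ hij => hij) hprod
  -- basic facts per prime factor
  have hip : ∀ i : s, ((i : Ideal A)).IsPrime := fun i =>
    Ideal.isPrime_of_prime (hprime _ i.2)
  have hib : ∀ i : s, (i : Ideal A) ≠ ⊥ := fun i => (hprime _ i.2).ne_zero
  have hie : ∀ i : s, 1 ≤ ee (i : Ideal A) := fun i =>
    Multiset.count_pos.mpr (Multiset.mem_toFinset.mp i.2)
  have hfin : ∀ i : s, Finite (L i) := fun i => by
    refine hAfin _ ?_
    exact pow_ne_zero _ (hib i)
  have hfinp : ∀ i : s, Finite (A ⧸ (i : Ideal A)) := fun i => hAfin _ (hib i)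
  -- x is faithful
  have hxf : MFaithful x := by
    intro c hc
    obtain ⟨a, rfl⟩ := Ideal.Quotient.mk_surjective c
    rw [Ideal.Quotient.eq_zero_iff_mem, ← hx a]
    funext k
    have hk := hc k
    obtain ⟨b, hb⟩ := Ideal.Quotient.mk_surjective (x k)
    show a • x k = 0
    rw [← hb] at hk ⊢
    rw [show a • Ideal.Quotient.mk 𝔞 b = Ideal.Quotient.mk 𝔞 a * Ideal.Quotient.mk 𝔞 b by
      rw [← _root_.map_mul]; rfl]
    exact hk
  -- the orbit is the set of faithful vectors
  have hset : {y : Fin r → A ⧸ 𝔞 |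
      ∃ g : GL (Fin r) (A ⧸ 𝔞), Matrix.mulVec (g : Matrix (Fin r) (Fin r) (A ⧸ 𝔞)) x = y}
      = {y : Fin r → A ⧸ 𝔞 | MFaithful y} := by
    ext y
    constructor
    · rintro ⟨g, hg⟩
      exact hxf.of_inOrbit ⟨g, hg⟩
    · intro hy
      exact inOrbit_of_components φ x y fun i =>
        local_inOrbit (hip i) (hib i) (hie i)
          ((faithful_comp_iff φ x).mp hxf i) ((faithful_comp_iff φ y).mp hy i)
  rw [hset]
  -- counting
  set NL : s → ℕ := fun i => Nat.card (L i) with hNL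
  set NP : s → ℕ := fun i => Nat.card (A ⧸ (i : Ideal A)) with hNP
  set NK : s → ℕ := fun i => Nat.card {z : L i //
    Ideal.Quotient.factor
      (Ideal.pow_le_self (by have := hie i; omega) : (i : Ideal A) ^ ee (i : Ideal A) ≤ (i : Ideal A)) z = 0} with hNK
  have hcard : Nat.card {y : Fin r → A ⧸ 𝔞 | MFaithful y} = ∏ i : s, (NL i ^ r - NK i ^ r) := by
    rw [card_faithful_eq_prod φ]
    refine Finset.prod_congr rfl fun i _ => ?_
    haveI := hfin i
    exact local_card_faithful (hip i) (hib i) (hie i) r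
  have hLK : ∀ i : s, NL i = NP i * NK i := fun i => by
    haveI := hfin i
    exact local_card_eq (hie i)
  have hNPpos : ∀ i : s, 0 < NP i := fun i => by
    haveI := hfinp i
    exact Nat.card_pos
  have hnorm : idealNorm 𝔞 = ∏ i : s, NL i := by
    rw [idealNorm, Nat.card_congr φ.toEquiv, Nat.card_pi]
  have hPD : primesDvd 𝔞 = ↑s := by
    ext p
    constructor
    · rintro ⟨h1, h2, h3⟩
      refine Multiset.mem_toFinset.mpr ?_
      obtain ⟨q, hq, hassoc⟩ := UniqueFactorizationMonoid.exists_mem_factors_of_dvd h𝔞0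
        ((Ideal.prime_iff_isPrime h2).mpr h1).irreducible h3
      rwa [associated_iff_eq.mp hassoc]
    · intro hps
      have hps' : p ∈ s := hps
      exact ⟨Ideal.isPrime_of_prime (hprime p hps'), (hprime p hps').ne_zero,
        UniqueFactorizationMonoid.dvd_of_mem_factors (Multiset.mem_toFinset.mp hps')⟩
  have hfp : ∏ᶠ 𝔭 ∈ primesDvd 𝔞, (1 - ((idealNorm 𝔭 : ℝ) ^ r)⁻¹)
      = ∏ i : s, (1 - ((NP i : ℝ) ^ r)⁻¹) := by
    rw [hPD, finprod_mem_coe_finset]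
    rw [← Finset.prod_coe_sort s (fun 𝔭 => 1 - ((idealNorm 𝔭 : ℝ) ^ r)⁻¹)]
    rfl
  rw [hcard, hfp, hnorm]
  push_cast
  rw [← Finset.prod_pow, ← Finset.prod_mul_distrib]
  refine Finset.prod_congr rfl fun i _ => ?_
  have hle : NK i ^ r ≤ NL i ^ r := Nat.pow_le_pow_left (by
    rw [hLK i]; exact Nat.le_mul_of_pos_left _ (hNPpos i)) r
  have hNPne : (NP i : ℝ) ≠ 0 := by
    exact_mod_cast (hNPpos i).ne'
  rw [Nat.cast_sub hle, hLK i]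
  push_cast
  field_simp
  ring
end

section
/- Let K be a field, let M be a (G_K,A)-module of rank r ≥ 2, let L/K be a finite separable extension inside K^sep, and let H ⊆ M be an A-submodule that is stable under Gal(K^sep/L) (as a set) and is isomorphic to A/𝔞 as an A-module, for some nonzero ideal 𝔞 ⊆ A. Then card(H) = |𝔞| ≤ (I(𝔞)·[L:K])^{1/(r-1)}. -/
open Submodule

section AuxUnimod
variable {A : Type*} [CommRing A] [IsDomain A] [IsDedekindDomain A]

lemma exists_functional {𝔞 : Ideal A} (h𝔞 : 𝔞 ≠ ⊥) {r : ℕ} (x : Fin r → A ⧸ 𝔞)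
    (hx : ∀ a : A, a • x = 0 → a ∈ 𝔞) :
    ∃ g : (Fin r → A ⧸ 𝔞) →ₗ[A ⧸ 𝔞] (A ⧸ 𝔞), g x = 1 := by
  have hJ : Ideal.span (Set.range x) = (⊤ : Ideal (A ⧸ 𝔞)) := by
    by_contra hne
    obtain ⟨𝔪, h𝔪max, hle⟩ := Ideal.exists_le_maximal _ hne
    set 𝔭 : Ideal A := 𝔪.comap (Ideal.Quotient.mk 𝔞) with h𝔭
    have h𝔞𝔭 : 𝔞 ≤ 𝔭 := fun a ha => by
      simp only [h𝔭, Ideal.mem_comap, Ideal.Quotient.eq_zero_iff_mem.mpr ha]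
      exact 𝔪.zero_mem
    obtain ⟨𝔠, h𝔠⟩ := (Ideal.dvd_iff_le).mpr h𝔞𝔭
    have h𝔭netop : 𝔭 ≠ ⊤ := by
      intro htop
      have h1 : (1:A) ∈ 𝔭 := htop ▸ trivial
      have : (1 : A ⧸ 𝔞) ∈ 𝔪 := by rw [h𝔭, Ideal.mem_comap, map_one] at h1; exact h1
      exact h𝔪max.ne_top (𝔪.eq_top_of_isUnit_mem this isUnit_one)
    have h𝔠not : ¬ 𝔠 ≤ 𝔞 := by
      intro hcle
      obtain ⟨𝔡, h𝔡⟩ := (Ideal.dvd_iff_le).mpr hcle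
      have heq : 𝔞 * ⊤ = 𝔞 * (𝔭 * 𝔡) := by
        rw [Ideal.mul_top]
        calc 𝔞 = 𝔭 * 𝔠 := h𝔠
          _ = 𝔭 * (𝔞 * 𝔡) := by rw [← h𝔡]
          _ = 𝔞 * (𝔭 * 𝔡) := by ring
      have h2 : (⊤ : Ideal A) = 𝔭 * 𝔡 := mul_left_cancel₀ h𝔞 heq
      exact h𝔭netop (top_le_iff.mp (h2.le.trans (Ideal.mul_le_inf.trans inf_le_left)))
    obtain ⟨a, ha𝔠, ha𝔞⟩ := SetLike.not_le_iff_exists.mp h𝔠not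
    refine ha𝔞 (hx a (funext fun i => ?_))
    obtain ⟨p, hp⟩ := Ideal.Quotient.mk_surjective (x i)
    have hpmem : p ∈ 𝔭 := by
      rw [h𝔭, Ideal.mem_comap, hp]
      exact hle (Ideal.subset_span ⟨i, rfl⟩)
    have : a * p ∈ 𝔞 := by
      rw [h𝔠, mul_comm]
      exact Ideal.mul_mem_mul ha𝔠 hpmem
    calc (a • x) i = Ideal.Quotient.mk 𝔞 a * x i := rfl
      _ = Ideal.Quotient.mk 𝔞 (a * p) := by rw [← hp]; rfl
      _ = 0 := Ideal.Quotient.eq_zero_iff_mem.mpr this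
  have h1 : (1 : A ⧸ 𝔞) ∈ Ideal.span (Set.range x) := hJ ▸ trivial
  obtain ⟨c, hc⟩ := mem_span_range_iff_exists_fun _ |>.mp h1
  refine ⟨∑ i, c i • LinearMap.proj i, ?_⟩
  simp only [LinearMap.sum_apply, LinearMap.smul_apply, LinearMap.proj_apply]
  simpa using hc
end AuxUnimod


section AuxTransvection
variable {R N : Type*} [CommRing R] [AddCommGroup N] [Module R N]

/-- The shear `w ↦ w + g(w) • z`. -/
def shearMap (g : N →ₗ[R] R) (z : N) : N →ₗ[R] N where
  toFun w := w + g w • z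
  map_add' u v := by simp [add_smul]; abel
  map_smul' a w := by simp [smul_add, smul_assoc]; module

lemma shearMap_apply (g : N →ₗ[R] R) (z w : N) : shearMap g z w = w + g w • z := rfl

/-- The transvection `w ↦ w + g(w) • z` as a linear automorphism, for `g z = 0`. -/
def transvection (g : N →ₗ[R] R) (z : N) (hz : g z = 0) : N ≃ₗ[R] N :=
  LinearEquiv.ofLinear (shearMap g z) (shearMap g (-z))
    (by ext w; simp [shearMap_apply, hz, smul_neg])
    (by ext w; simp [shearMap_apply, hz, smul_neg])

lemma transvection_apply (g : N →ₗ[R] R) (z : N) (hz : g z = 0) (w : N) :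
    transvection g z hz w = w + g w • z := rfl

lemma transvection_symm_apply (g : N →ₗ[R] R) (z : N) (hz : g z = 0) (w : N) :
    (transvection g z hz).symm w = w - g w • z := by
  show shearMap g (-z) w = w - g w • z
  rw [shearMap_apply, smul_neg, sub_eq_add_neg]
end AuxTransvection


section AuxFixing
variable {K Ksep : Type*} [Field K] [Field Ksep] [Algebra K Ksep] [IsSepClosure K Ksep]

lemma fixingSubgroup_finite_quotient_and_index_le
    (L : IntermediateField K Ksep) (hL : FiniteDimensional K L) :
    Finite ((Ksep ≃ₐ[K] Ksep) ⧸ L.fixingSubgroup) ∧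
      L.fixingSubgroup.index ≤ Module.finrank K L := by
  haveI : IsSepClosed Ksep := IsSepClosure.sep_closed K
  haveI : Algebra.IsSeparable K L := Algebra.isSeparable_tower_bot_of_isSeparable K L Ksep
  -- the algHom count
  have hsplits : ∀ s : L, s ∈ (Set.univ : Set L) →
      IsIntegral K s ∧ Polynomial.Splits ((minpoly K s).map (algebraMap K Ksep)) := fun s _ =>
    ⟨Algebra.IsSeparable.isIntegral K s,
      IsSepClosed.splits_codomain _ (Algebra.IsSeparable.isSeparable K s)⟩
  let eqv := Field.embEquivOfAdjoinSplits K L Ksep (IntermediateField.adjoin_univ K L) hsplits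
  haveI : Finite (Field.Emb K L) :=
    (Nat.card_ne_zero.mp (NeZero.ne (Field.finSepDegree K L))).2
  haveI hfin : Finite (L →ₐ[K] Ksep) := Finite.of_equiv _ eqv
  -- the restriction map on the quotient
  have hdescend : ∀ σ τ : Ksep ≃ₐ[K] Ksep, σ⁻¹ * τ ∈ L.fixingSubgroup →
      (σ.toAlgHom.comp L.val) = (τ.toAlgHom.comp L.val) := by
    intro σ τ h
    ext x
    have := h x
    simp only [AlgEquiv.smul_def] at this
    have h2 : σ.symm (τ x) = (x : Ksep) := this
    simp only [AlgHom.comp_apply]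
    change σ (x : Ksep) = τ (x : Ksep)
    conv_lhs => rw [← h2]
    simp
  let F : ((Ksep ≃ₐ[K] Ksep) ⧸ L.fixingSubgroup) → (L →ₐ[K] Ksep) :=
    Quotient.lift (fun σ : Ksep ≃ₐ[K] Ksep => σ.toAlgHom.comp L.val)
      (fun σ τ h => hdescend σ τ (QuotientGroup.leftRel_apply.mp h))
  have hFinj : Function.Injective F := by
    intro a b
    induction a using Quotient.inductionOn with | h σ =>
    induction b using Quotient.inductionOn with | h τ =>
    intro h
    have heq : ∀ x : L, σ (x : Ksep) = τ (x : Ksep) := fun x => by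
      have := congrArg (fun f : L →ₐ[K] Ksep => f x) h
      simpa [F] using this
    refine Quotient.sound (QuotientGroup.leftRel_apply.mpr ?_)
    intro x
    simp only [AlgEquiv.smul_def, AlgEquiv.mul_apply]
    change σ.symm (τ x) = (x : Ksep)
    rw [← heq x]
    simp
  haveI hQfin : Finite ((Ksep ≃ₐ[K] Ksep) ⧸ L.fixingSubgroup) := Finite.of_injective F hFinj
  refine ⟨hQfin, ?_⟩
  have h1 : L.fixingSubgroup.index = Nat.card ((Ksep ≃ₐ[K] Ksep) ⧸ L.fixingSubgroup) := rfl
  have h2 : Nat.card ((Ksep ≃ₐ[K] Ksep) ⧸ L.fixingSubgroup) ≤ Nat.card (L →ₐ[K] Ksep) :=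
    Nat.card_le_card_of_injective F hFinj
  have h3 : Nat.card (L →ₐ[K] Ksep) = Field.finSepDegree K L :=
    (Nat.card_congr eqv).symm
  have h4 : Field.finSepDegree K L ≤ Module.finrank K L := Field.finSepDegree_le_finrank K L
  omega
end AuxFixing


set_option maxHeartbeats 1000000 in
/-- **Proposition (bound on Galois-stable cyclic submodules).**
Let `K` be a field and `M` a `(G_K, A)`-module of rank `r ≥ 2`, where `A` is a Dedekind
domain, not a field, all of whose proper quotients are finite. Let `L/K` be a finite
separable extension inside `Ksep` and `H ⊆ M` an `A`-submodule stable under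
`Gal(Ksep/L)` with `H ≅ A ⧸ 𝔞` for a nonzero ideal `𝔞 ⊆ A`. Then
`card H = |𝔞| ≤ (I(𝔞) · [L:K]) ^ (1/(r-1))`. -/
theorem galois_stable_cyclic_submodule_bound
    {A : Type*} [CommRing A] [IsDomain A] [IsDedekindDomain A] (hA : ¬IsField A)
    (hAfin : ∀ 𝔟 : Ideal A, 𝔟 ≠ ⊥ → Finite (A ⧸ 𝔟))
    {K Ksep : Type*} [Field K] [Field Ksep] [Algebra K Ksep] [IsSepClosure K Ksep]
    {M : Type*} [AddCommGroup M] [Module A M]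
    (ρ : (Ksep ≃ₐ[K] Ksep) →* (M ≃ₗ[A] M)) (r : ℕ) (hr : 2 ≤ r)
    (hGM : IsGaloisModule ρ r)
    (L : IntermediateField K Ksep) (hL : FiniteDimensional K L)
    (𝔞 : Ideal A) (h𝔞 : 𝔞 ≠ ⊥)
    (H : Submodule A M)
    (hstab : ∀ σ ∈ L.fixingSubgroup, ∀ x ∈ H, ρ σ x ∈ H)
    (hiso : Nonempty (H ≃ₗ[A] A ⧸ 𝔞)) :
    Nat.card H = idealNorm 𝔞 ∧
    (idealNorm 𝔞 : ℝ)
      ≤ ((galIndex ρ 𝔞 : ℝ) * (Module.finrank K L : ℝ)) ^ ((1 : ℝ) / ((r : ℝ) - 1)) := by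
    classical
  obtain ⟨e'⟩ := hiso
  have hcard : Nat.card H = idealNorm 𝔞 := Nat.card_congr e'.toEquiv
  refine ⟨hcard, ?_⟩
  haveI hRfin : Finite (A ⧸ 𝔞) := hAfin 𝔞 h𝔞
  set n : ℕ := idealNorm 𝔞 with hn
  have hnpos : 0 < n := Nat.card_pos
  -- the generator of `H`
  set x₀ : M := ((e'.symm (1 : A ⧸ 𝔞)) : M) with hx₀def
  have hx₀H : x₀ ∈ H := (e'.symm 1).2
  have hsmul1 : ∀ a : A, a • (1 : A ⧸ 𝔞) = Ideal.Quotient.mk 𝔞 a := fun a => by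
    show Ideal.Quotient.mk 𝔞 a * 1 = _
    rw [mul_one]
  have hgen : ∀ h ∈ H, ∃ a : A, h = a • x₀ := by
    intro h hh
    obtain ⟨a, ha⟩ := Ideal.Quotient.mk_surjective (e' ⟨h, hh⟩)
    refine ⟨a, ?_⟩
    have h1 : (⟨h, hh⟩ : H) = a • e'.symm 1 := by
      apply e'.injective
      rw [map_smul, LinearEquiv.apply_symm_apply, hsmul1, ha]
    have h2 := congrArg (fun y : H => (y : M)) h1
    simpa using h2
  have hann : ∀ a : A, a • x₀ = 0 → a ∈ 𝔞 := by
    intro a ha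
    have h0 : a • (e'.symm (1 : A ⧸ 𝔞)) = 0 := by
      apply Subtype.ext
      simpa [hx₀def] using ha
    have h1 := congrArg e' h0
    rw [map_smul, LinearEquiv.apply_symm_apply, map_zero, hsmul1] at h1
    exact Ideal.Quotient.eq_zero_iff_mem.mp h1
  -- `H` is `𝔞`-torsion
  have htor : ∀ h ∈ H, h ∈ torsionBySet A M 𝔞 := by
    intro h hh
    rw [mem_torsionBySet_iff]
    rintro ⟨a, ha⟩
    have h0 : a • (⟨h, hh⟩ : H) = 0 := by
      apply e'.injective
      rw [map_smul, map_zero]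
      show Ideal.Quotient.mk 𝔞 a * _ = 0
      rw [Ideal.Quotient.eq_zero_iff_mem.mpr ha, zero_mul]
    calc a • h = ((a • (⟨h, hh⟩ : H) : H) : M) := rfl
      _ = 0 := by rw [h0]; rfl
  obtain ⟨e⟩ := hGM.rankEq 𝔞 h𝔞
  haveI hTfin : Finite (torsionBySet A M (𝔞 : Set A)) := Finite.of_equiv _ e.symm.toEquiv
  set T := torsionBySet A M (𝔞 : Set A) with hTdef
  let HT : Submodule A T := H.comap T.subtype
  let x₀' : T := ⟨x₀, htor x₀ hx₀H⟩
  have hx₀HT : x₀' ∈ HT := hx₀H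
  set x : Fin r → A ⧸ 𝔞 := e x₀' with hxdef
  have hxann : ∀ a : A, a • x = 0 → a ∈ 𝔞 := by
    intro a hax
    have h0 : a • x₀' = 0 := e.injective (by rw [map_smul, map_zero]; exact hax)
    exact hann a (congrArg Subtype.val h0)
  obtain ⟨g, hgx⟩ := exists_functional h𝔞 x hxann
  have hgsurj : Function.Surjective g := fun t =>
    ⟨t • x, by rw [map_smul, hgx, smul_eq_mul, mul_one]⟩
  have hcardN : Nat.card (Fin r → A ⧸ 𝔞) = n ^ r := by
    rw [Nat.card_fun]
    simp [hn, idealNorm, Nat.card_eq_fintype_card]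
  have hcardquot : Nat.card ((Fin r → A ⧸ 𝔞) ⧸ LinearMap.ker g) = n :=
    Nat.card_congr (LinearMap.quotKerEquivOfSurjective g hgsurj).toEquiv
  have hcardker : Nat.card (LinearMap.ker g) = n ^ (r - 1) := by
    have h1 := Submodule.card_eq_card_quotient_mul_card (LinearMap.ker g)
    rw [hcardN, hcardquot] at h1
    have h2 : n ^ r = n ^ (r - 1) * n := by
      rw [← pow_succ]
      congr 1
      omega
    rw [h2] at h1
    exact (Nat.eq_of_mul_eq_mul_right hnpos h1).symm
  -- the automorphism group of `M[𝔞]` and the stabilizer of `H`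
  haveI hGfin : Finite (T ≃ₗ[A] T) :=
    Finite.of_injective (fun φ : T ≃ₗ[A] T => (φ : T → T)) DFunLike.coe_injective
  let S : Subgroup (T ≃ₗ[A] T) :=
    { carrier := {φ | ∀ y : T, y ∈ HT → φ y ∈ HT}
      one_mem' := fun y hy => hy
      mul_mem' := fun {φ ψ} hφ hψ y hy => hφ _ (hψ y hy)
      inv_mem' := by
        intro φ hφ y hy
        have hinj : Function.Injective (fun w : HT => (⟨φ w, hφ w w.2⟩ : HT)) := by
          intro u v huv
          have h1 := congrArg (fun t : HT => (t : T)) huv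
          exact Subtype.ext (φ.injective (by simpa using h1))
        have hsurj := Finite.injective_iff_surjective.mp hinj
        obtain ⟨w, hw⟩ := hsurj ⟨y, hy⟩
        have h2 : φ w = y := congrArg Subtype.val hw
        have h3 : (φ⁻¹ : T ≃ₗ[A] T) y = w := by
          show φ.symm y = w
          rw [← h2]
          simp
        show (φ⁻¹ : T ≃ₗ[A] T) y ∈ HT
        rw [h3]
        exact w.2 }
  -- the injection from `ker g` into `G ⧸ S` by transvections
  let tv : (z : Fin r → A ⧸ 𝔞) → g z = 0 → (T ≃ₗ[A] T) := fun z hz =>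
    (e.trans ((transvection g z hz).restrictScalars A)).trans e.symm
  have htv_apply : ∀ (z : Fin r → A ⧸ 𝔞) (hz : g z = 0) (y : T),
      tv z hz y = e.symm (e y + g (e y) • z) := fun z hz y => rfl
  have htv_symm : ∀ (z : Fin r → A ⧸ 𝔞) (hz : g z = 0) (y : T),
      (tv z hz).symm y = e.symm (e y - g (e y) • z) := by
    intro z hz y
    rw [LinearEquiv.symm_apply_eq, htv_apply z hz, LinearEquiv.apply_symm_apply,
      map_sub, map_smul, hz, smul_zero, sub_zero, sub_add_cancel,
      LinearEquiv.symm_apply_apply]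
  let Ψ : LinearMap.ker g → ((T ≃ₗ[A] T) ⧸ S) := fun z => QuotientGroup.mk (tv z z.2)
  have hΨinj : Function.Injective Ψ := by
    intro z z' hzz
    have hmem : (tv z z.2)⁻¹ * (tv z' z'.2) ∈ S := QuotientGroup.eq.mp hzz
    have h1 : ((tv z z.2)⁻¹ * (tv z' z'.2)) x₀' ∈ HT := hmem x₀' hx₀HT
    -- compute the image under `e`
    have hgz : g (z : Fin r → A ⧸ 𝔞) = 0 := z.2
    have hgz' : g (z' : Fin r → A ⧸ 𝔞) = 0 := z'.2
    have hcomp : e (((tv z z.2)⁻¹ * (tv z' z'.2)) x₀') = x + (z' : Fin r → A ⧸ 𝔞) - z := by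
      have h2 : ((tv z z.2)⁻¹ * (tv z' z'.2)) x₀' = (tv z z.2).symm ((tv z' z'.2) x₀') := rfl
      rw [h2, htv_apply z' z'.2 x₀', htv_symm z z.2, LinearEquiv.apply_symm_apply,
        LinearEquiv.apply_symm_apply, ← hxdef, hgx, one_smul, map_add, hgx, hgz',
        add_zero, one_smul]
    obtain ⟨a, ha⟩ := hgen _ h1
    have hsub : (((tv z z.2)⁻¹ * (tv z' z'.2)) x₀' : T) = a • x₀' := Subtype.ext ha
    have hex : x + (z' : Fin r → A ⧸ 𝔞) - z = a • x := by
      rw [← hcomp, hsub, map_smul]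
    have hsm : a • x = (Ideal.Quotient.mk 𝔞 a) • x := by
      rw [← Ideal.Quotient.algebraMap_eq, algebraMap_smul]
    have hga : (1 : A ⧸ 𝔞) = Ideal.Quotient.mk 𝔞 a := by
      have h3 := congrArg g hex
      rw [map_sub, map_add, hgx, hgz, hgz', hsm, map_smul, hgx, smul_eq_mul, mul_one] at h3
      simpa using h3
    have hax : a • x = x := by
      rw [hsm, ← hga, one_smul]
    have hzz' : (z' : Fin r → A ⧸ 𝔞) = z := by
      have h4 : x + ((z' : Fin r → A ⧸ 𝔞) - z) = x := by
        rw [← add_sub_assoc, hex, hax]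
      exact sub_eq_zero.mp (add_eq_left.mp h4)
    exact Subtype.ext hzz'.symm
  have hSindex : n ^ (r - 1) ≤ S.index := by
    have h1 : S.index = Nat.card ((T ≃ₗ[A] T) ⧸ S) := rfl
    rw [h1, ← hcardker]
    exact Nat.card_le_card_of_injective Ψ hΨinj
  -- the image of the Galois group
  have hcoe : ∀ (σ : Ksep ≃ₐ[K] Ksep) (y : T), ((galRep ρ 𝔞 σ) y : M) = ρ σ (y : M) :=
    fun σ y => LinearEquiv.ofSubmodules_apply _ _ y
  let Δ : Subgroup (T ≃ₗ[A] T) := Subgroup.map (galRep ρ 𝔞) L.fixingSubgroup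
  have hΔS : Δ ≤ S := by
    rintro φ ⟨σ, hσ, rfl⟩ y hy
    show ((galRep ρ 𝔞 σ) y : M) ∈ H
    rw [hcoe σ y]
    exact hstab σ hσ (y : M) hy
  have hΓ : Δ ≤ (galRep ρ 𝔞).range := by
    rintro φ ⟨σ, _, rfl⟩
    exact ⟨σ, rfl⟩
  have hidx1 : S.index ≤ Δ.index :=
    Nat.le_of_dvd (Nat.pos_of_ne_zero Subgroup.index_ne_zero_of_finite)
      (Subgroup.index_dvd_of_le hΔS)
  have hidx2 : Δ.index = Δ.relIndex (galRep ρ 𝔞).range * ((galRep ρ 𝔞).range).index :=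
    (Subgroup.relIndex_mul_index hΓ).symm
  obtain ⟨hQfin, hfixle⟩ := fixingSubgroup_finite_quotient_and_index_le L hL
  have hrel : Δ.relIndex (galRep ρ 𝔞).range ≤ Module.finrank K L := by
    have hwd : ∀ σ τ : Ksep ≃ₐ[K] Ksep, σ⁻¹ * τ ∈ L.fixingSubgroup →
        (QuotientGroup.mk (⟨galRep ρ 𝔞 σ, σ, rfl⟩ : (galRep ρ 𝔞).range) :
          (galRep ρ 𝔞).range ⧸ Δ.subgroupOf (galRep ρ 𝔞).range) =
        QuotientGroup.mk (⟨galRep ρ 𝔞 τ, τ, rfl⟩ : (galRep ρ 𝔞).range) := by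
      intro σ τ h
      apply QuotientGroup.eq.mpr
      rw [Subgroup.mem_subgroupOf]
      show ((galRep ρ 𝔞 σ))⁻¹ * (galRep ρ 𝔞 τ) ∈ Δ
      rw [← map_inv, ← map_mul]
      exact ⟨σ⁻¹ * τ, h, rfl⟩
    let F' : ((Ksep ≃ₐ[K] Ksep) ⧸ L.fixingSubgroup) →
        ((galRep ρ 𝔞).range ⧸ Δ.subgroupOf (galRep ρ 𝔞).range) :=
      Quotient.lift (fun σ : Ksep ≃ₐ[K] Ksep =>
          (QuotientGroup.mk (⟨galRep ρ 𝔞 σ, σ, rfl⟩ : (galRep ρ 𝔞).range)))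
        (fun σ τ h => hwd σ τ (QuotientGroup.leftRel_apply.mp h))
    have hF'surj : Function.Surjective F' := by
      intro q
      induction q using Quotient.inductionOn with | h γ =>
      obtain ⟨σ, hσ⟩ := γ.2
      refine ⟨Quotient.mk'' σ, ?_⟩
      show QuotientGroup.mk (⟨galRep ρ 𝔞 σ, σ, rfl⟩ : (galRep ρ 𝔞).range) = _
      congr 1
      exact Subtype.ext hσ
    have h1 : Δ.relIndex (galRep ρ 𝔞).range
        = Nat.card ((galRep ρ 𝔞).range ⧸ Δ.subgroupOf (galRep ρ 𝔞).range) := rfl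
    have h2 : Nat.card ((galRep ρ 𝔞).range ⧸ Δ.subgroupOf (galRep ρ 𝔞).range)
        ≤ Nat.card ((Ksep ≃ₐ[K] Ksep) ⧸ L.fixingSubgroup) :=
      Nat.card_le_card_of_surjective F' hF'surj
    have h3 : Nat.card ((Ksep ≃ₐ[K] Ksep) ⧸ L.fixingSubgroup) = L.fixingSubgroup.index := rfl
    omega
  have key : n ^ (r - 1) ≤ galIndex ρ 𝔞 * Module.finrank K L := by
    have h4 : ((galRep ρ 𝔞).range).index = galIndex ρ 𝔞 := rfl
    calc n ^ (r - 1) ≤ S.index := hSindex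
      _ ≤ Δ.index := hidx1
      _ = Δ.relIndex (galRep ρ 𝔞).range * ((galRep ρ 𝔞).range).index := hidx2
      _ ≤ Module.finrank K L * galIndex ρ 𝔞 := by
          rw [h4]
          exact Nat.mul_le_mul_right _ hrel
      _ = galIndex ρ 𝔞 * Module.finrank K L := Nat.mul_comm _ _
  -- conclude with real arithmetic
  have hp : 0 < r - 1 := by omega
  have hcastp : ((r - 1 : ℕ) : ℝ) = (r : ℝ) - 1 := by
    have h1 : (1 : ℕ) ≤ r := by omega
    push_cast [Nat.cast_sub h1]
    ring
  have hxpos : (0 : ℝ) ≤ (n : ℝ) := by positivity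
  have hkeyR : ((n : ℝ) ^ (r - 1 : ℕ)) ≤ (galIndex ρ 𝔞 : ℝ) * (Module.finrank K L : ℝ) := by
    exact_mod_cast key
  have e1 : (n : ℝ) = ((n : ℝ) ^ (r - 1 : ℕ)) ^ ((1 : ℝ) / ((r - 1 : ℕ) : ℝ)) := by
    rw [← Real.rpow_natCast (n : ℝ) (r - 1), ← Real.rpow_mul hxpos, mul_one_div,
      div_self (by exact_mod_cast hp.ne' : ((r - 1 : ℕ) : ℝ) ≠ 0), Real.rpow_one]
  calc (n : ℝ) = ((n : ℝ) ^ (r - 1 : ℕ)) ^ ((1 : ℝ) / ((r - 1 : ℕ) : ℝ)) := e1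
    _ ≤ ((galIndex ρ 𝔞 : ℝ) * (Module.finrank K L : ℝ)) ^ ((1 : ℝ) / ((r - 1 : ℕ) : ℝ)) :=
        Real.rpow_le_rpow (by positivity) hkeyR (by positivity)
    _ = ((galIndex ρ 𝔞 : ℝ) * (Module.finrank K L : ℝ)) ^ ((1 : ℝ) / ((r : ℝ) - 1)) := by
        rw [hcastp]
end
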